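/- Assume (A2), (A4) and (A5), and for s > 0 and n ≥ 1 let T_n(s) = Σ_{σ∈𝒮_n} ℰ_r(σ)^s. Then for every s > 0 there exist positive numbers g₁(s) and g₂(s) such that for every pair n, l ∈ ℕ one has g₁(s)·T_n(s)·T_l(s) ≤ T_{n+l}(s) ≤ g₂(s)·T_n(s)·T_l(s). -/

import Mathlib

open scoped Classical ENNReal
open Filter MeasureTheory

noncomputable section

namespace MTM

/-- the edge relation of the directed graph `𝒢`: `(i,j) ∈ G₂ ↔ p i j > 0`. -/
def edge (p : ℕ → ℕ → ℝ) (i j : ℕ) : Prop := 0 < p i j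

/-- product of transition weights along a word. -/
def pword (p : ℕ → ℕ → ℝ) : List ℕ → ℝ
  | [] => 1
  | [_] => 1
  | a :: b :: t => p a b * pword p (b :: t)

/-- product of contraction ratios along a word. -/
def sword (sr : ℕ → ℕ → ℝ) : List ℕ → ℝ
  | [] => 1
  | [_] => 1
  | a :: b :: t => sr a b * sword sr (b :: t)

/-- `𝒯(σ)`: all lifts of a word, each letter `i` may be replaced by `i + N`. -/
def lifts (N : ℕ) : List ℕ → Finset (List ℕ)
  | [] => {[]}
  | i :: t => (lifts N t).biUnion fun l => {i :: l, (i + N) :: l}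

/-- `Γ(σ) = G_n ∩ 𝒯(σ)`. -/
def Gam (p : ℕ → ℕ → ℝ) (N : ℕ) (σ : List ℕ) : Finset (List ℕ) :=
  (lifts N σ).filter fun τ => τ.Chain' (edge p)

/-- words over the alphabet `Ψ = {1,…,N}`. -/
def isPsiWord (N : ℕ) (σ : List ℕ) : Prop :=
  σ ≠ [] ∧ ∀ x ∈ σ, x ∈ Finset.Icc 1 N

/-- `σ ∈ 𝒮_*`: a `Ψ`-word having at least one admissible lift. -/
def isSword (p : ℕ → ℕ → ℝ) (N : ℕ) (σ : List ℕ) : Prop :=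
  isPsiWord N σ ∧ (Gam p N σ).Nonempty

/-- `σ ∈ G_*`: admissible words over `Ω = {1,…,2N}`. -/
def isGword (p : ℕ → ℕ → ℝ) (N : ℕ) (σ : List ℕ) : Prop :=
  σ ≠ [] ∧ (∀ x ∈ σ, x ∈ Finset.Icc 1 (2 * N)) ∧ σ.Chain' (edge p)

/-- `σ ∈ H₁^*`: admissible words with all letters in `Ψ`. -/
def isH1word (p : ℕ → ℕ → ℝ) (N : ℕ) (σ : List ℕ) : Prop :=
  σ ≠ [] ∧ (∀ x ∈ σ, x ∈ Finset.Icc 1 N) ∧ σ.Chain' (edge p)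

/-- `σ ∈ H₂^*`: admissible words with all letters in `Υ = {N+1,…,2N}`. -/
def isH2word (p : ℕ → ℕ → ℝ) (N : ℕ) (σ : List ℕ) : Prop :=
  σ ≠ [] ∧ (∀ x ∈ σ, x ∈ Finset.Icc (N + 1) (2 * N)) ∧ σ.Chain' (edge p)

/-- `μ(J_σ) = Σ_{σ̃ ∈ Γ(σ)} χ_{σ̃₁} p_{σ̃}`. -/
def muJ (p : ℕ → ℕ → ℝ) (χ : ℕ → ℝ) (N : ℕ) (σ : List ℕ) : ℝ :=
  ∑ τ ∈ Gam p N σ, χ (τ.headD 0) * pword p τ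

/-- `ℰ_r(σ) = μ(J_σ) s_σ^r`, with `ℰ_r(θ) = 1` for the empty word. -/
def Er (p : ℕ → ℕ → ℝ) (χ : ℕ → ℝ) (sr : ℕ → ℕ → ℝ) (N : ℕ) (r : ℝ) (σ : List ℕ) : ℝ :=
  if σ = [] then 1 else muJ p χ N σ * sword sr σ ^ r

/-- `I_{1,σ}` resp. `I_{2,σ}`: the part of `μ(J_σ)` coming from lifts ending with `i`
(resp. with `i⁺`, when applied with `i + N`). -/
def Ipart (p : ℕ → ℕ → ℝ) (χ : ℕ → ℝ) (N : ℕ) (i : ℕ) (σ : List ℕ) : ℝ :=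
  ∑ τ ∈ (Gam p N σ).filter (fun τ => τ.getLastD 0 = i), χ (τ.headD 0) * pword p τ

/-- all words of a given length over a finite alphabet. -/
def wordsOfLen (S : Finset ℕ) : ℕ → Finset (List ℕ)
  | 0 => {[]}
  | n + 1 => (wordsOfLen S n).biUnion fun l => S.image fun a => a :: l

/-- `𝒮_n` as a finite set of words. -/
def Sn (p : ℕ → ℕ → ℝ) (N n : ℕ) : Finset (List ℕ) :=
  (wordsOfLen (Finset.Icc 1 N) n).filter (isSword p N)

/-- irreducibility of the sub-matrix of `p` indexed by `S`: the corresponding directed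
graph is strongly connected. -/
def irreducibleOn (p : ℕ → ℕ → ℝ) (S : Finset ℕ) : Prop :=
  ∀ i ∈ S, ∀ j ∈ S, ∃ c : List ℕ, (∀ x ∈ c, x ∈ S) ∧ List.Chain (edge p) i (c ++ [j])

/-- Assumption (A1): `P₁, P₂` irreducible and `P₄ = 0`. -/
def A1 (p : ℕ → ℕ → ℝ) (N : ℕ) : Prop :=
  irreducibleOn p (Finset.Icc 1 N) ∧
    irreducibleOn (fun a b => p (a + N) (b + N)) (Finset.Icc 1 N) ∧
    ∀ i ∈ Finset.Icc 1 N, ∀ j ∈ Finset.Icc 1 N, p (i + N) j = 0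

/-- Assumption (A2). -/
def A2 (p : ℕ → ℕ → ℝ) (N : ℕ) : Prop :=
  ∀ i ∈ Finset.Icc 1 N,
    2 ≤ ((Finset.Icc 1 N).filter fun j => 0 < p i j).card ∧
      2 ≤ ((Finset.Icc 1 N).filter fun j => 0 < p (i + N) (j + N)).card

/-- Assumption (A3): `ℳ_{i,j} = ∅` or `ℳ_{i,j} = {(i,j),(i,j⁺),(i⁺,j⁺)}`. -/
def A3 (p : ℕ → ℕ → ℝ) (N : ℕ) : Prop :=
  ∀ i ∈ Finset.Icc 1 N, ∀ j ∈ Finset.Icc 1 N,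
    (p i j = 0 ∧ p i (j + N) = 0 ∧ p (i + N) j = 0 ∧ p (i + N) (j + N) = 0) ∨
      (0 < p i j ∧ 0 < p i (j + N) ∧ p (i + N) j = 0 ∧ 0 < p (i + N) (j + N))

/-- Assumption (A4): `ℳ_{i,j} = ∅` or `ℳ_{i,j} = 𝒩_{i,j}`. -/
def A4 (p : ℕ → ℕ → ℝ) (N : ℕ) : Prop :=
  ∀ i ∈ Finset.Icc 1 N, ∀ j ∈ Finset.Icc 1 N,
    (p i j = 0 ∧ p i (j + N) = 0 ∧ p (i + N) j = 0 ∧ p (i + N) (j + N) = 0) ∨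
      (0 < p i j ∧ 0 < p i (j + N) ∧ 0 < p (i + N) j ∧ 0 < p (i + N) (j + N))

/-- Assumption (A5): `P₁` is irreducible. -/
def A5 (p : ℕ → ℕ → ℝ) (N : ℕ) : Prop := irreducibleOn p (Finset.Icc 1 N)

/-- `T_σ = T_{σ₁σ₂} ∘ ⋯ ∘ T_{σ_{n-1}σ_n}` (identity for words of length `≤ 1`). -/
def Tword {E : Type*} (T : ℕ → ℕ → E → E) : List ℕ → E → E
  | [], x => x
  | [_], x => x
  | a :: b :: t, x => T a b (Tword T (b :: t) x)

/-- the cylinder set `J_σ = T_σ (J_{σ_n})`. -/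
def Jword {E : Type*} (T : ℕ → ℕ → E → E) (J : ℕ → Set E) (σ : List ℕ) : Set E :=
  Tword T σ '' J (σ.getLastD 0)

/-- the Mauldin–Williams fractal `K = ⋂_k ⋃_{σ ∈ G_k} J_σ`. -/
def attractor {E : Type*} (p : ℕ → ℕ → ℝ) (N : ℕ) (T : ℕ → ℕ → E → E) (J : ℕ → Set E) :
    Set E :=
  ⋂ n : ℕ, ⋃ σ ∈ {σ : List ℕ | isGword p N σ ∧ σ.length = n + 1}, Jword T J σ

/-- `μ` is reducible: `μ = ν₁ ∘ π₁⁻¹` for the Markov-type measure `ν₁` associated with some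
`N × N` row-stochastic matrix and positive probability vector; equivalently, the cylinder
values of `μ` are of Markov type. -/
def reducible {E : Type*} [MeasurableSpace E] (p : ℕ → ℕ → ℝ) (N : ℕ)
    (T : ℕ → ℕ → E → E) (J : ℕ → Set E) (μ : Measure E) : Prop :=
  ∃ (pt : ℕ → ℕ → ℝ) (χt : ℕ → ℝ),
    (∀ i ∈ Finset.Icc 1 N, ∀ j ∈ Finset.Icc 1 N, 0 ≤ pt i j) ∧
      (∀ i ∈ Finset.Icc 1 N, ∑ j ∈ Finset.Icc 1 N, pt i j = 1) ∧
      (∀ i ∈ Finset.Icc 1 N, 0 < χt i) ∧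
      (∑ i ∈ Finset.Icc 1 N, χt i = 1) ∧
      ∀ σ : List ℕ, isSword p N σ →
        μ (Jword T J σ) = ENNReal.ofReal (χt (σ.headD 0) * pword pt σ)

/-- `e^r_{k,r}(μ)`: the `k`-th quantization error of order `r`, to the `r`-th power. -/
def quantErr {E : Type*} [PseudoMetricSpace E] [MeasurableSpace E] (r : ℝ) (μ : Measure E)
    (k : ℕ) : ℝ :=
  sInf ((fun α : Set E => ∫ x, Metric.infDist x α ^ r ∂μ) ''
    {α : Set E | α.Nonempty ∧ α.Finite ∧ α.ncard ≤ k})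

/-- the upper quantization coefficient `Q̄_r^s(μ) = limsup_k k^{r/s} e^r_{k,r}(μ)`. -/
def upperQC {E : Type*} [PseudoMetricSpace E] [MeasurableSpace E] (r s : ℝ)
    (μ : Measure E) : ℝ≥0∞ :=
  limsup (fun k : ℕ => ENNReal.ofReal ((k : ℝ) ^ (r / s) * quantErr r μ k)) atTop

/-- the lower quantization coefficient `Q̲_r^s(μ)`. -/
def lowerQC {E : Type*} [PseudoMetricSpace E] [MeasurableSpace E] (r s : ℝ)
    (μ : Measure E) : ℝ≥0∞ :=
  liminf (fun k : ℕ => ENNReal.ofReal ((k : ℝ) ^ (r / s) * quantErr r μ k)) atTop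

/-- the upper quantization dimension `D̄_r(μ) = limsup_k log k / (-log e_{k,r}(μ))`. -/
def upperQD {E : Type*} [PseudoMetricSpace E] [MeasurableSpace E] (r : ℝ)
    (μ : Measure E) : ℝ :=
  limsup (fun k : ℕ => Real.log k / (-Real.log (quantErr r μ k ^ (1 / r)))) atTop

/-- the lower quantization dimension `D̲_r(μ)`. -/
def lowerQD {E : Type*} [PseudoMetricSpace E] [MeasurableSpace E] (r : ℝ)
    (μ : Measure E) : ℝ :=
  liminf (fun k : ℕ => Real.log k / (-Real.log (quantErr r μ k ^ (1 / r)))) atTop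

/-- spectral radius of a real matrix: the largest modulus of a complex eigenvalue. -/
def specRad {n : Type*} [Fintype n] [DecidableEq n] (M : Matrix n n ℝ) : ℝ :=
  sSup (norm '' spectrum ℂ (M.map (algebraMap ℝ ℂ)))

/-- `A₁(s) = ((p_{i,j} s_{i,j}^r)^s)_{i,j=1}^N`. -/
def matA1 (p sr : ℕ → ℕ → ℝ) (N : ℕ) (r s : ℝ) : Matrix (Fin N) (Fin N) ℝ :=
  Matrix.of fun i j => (p (i.1 + 1) (j.1 + 1) * sr (i.1 + 1) (j.1 + 1) ^ r) ^ s

/-- `A₂(s) = ((p_{i⁺,j⁺} s_{i⁺,j⁺}^r)^s)_{i,j=1}^N`. -/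
def matA2 (p sr : ℕ → ℕ → ℝ) (N : ℕ) (r s : ℝ) : Matrix (Fin N) (Fin N) ℝ :=
  Matrix.of fun i j => (p (i.1 + 1 + N) (j.1 + 1 + N) * sr (i.1 + 1 + N) (j.1 + 1 + N) ^ r) ^ s

/-- `A₃(s) = ((p_{i,j⁺} s_{i,j⁺}^r)^s)_{i,j=1}^N`. -/
def matA3 (p sr : ℕ → ℕ → ℝ) (N : ℕ) (r s : ℝ) : Matrix (Fin N) (Fin N) ℝ :=
  Matrix.of fun i j => (p (i.1 + 1) (j.1 + 1 + N) * sr (i.1 + 1) (j.1 + 1 + N) ^ r) ^ s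

/-- `A₄(s) = ((p_{i⁺,j} s_{i⁺,j}^r)^s)_{i,j=1}^N`. -/
def matA4 (p sr : ℕ → ℕ → ℝ) (N : ℕ) (r s : ℝ) : Matrix (Fin N) (Fin N) ℝ :=
  Matrix.of fun i j => (p (i.1 + 1 + N) (j.1 + 1) * sr (i.1 + 1 + N) (j.1 + 1) ^ r) ^ s

/-- the block matrix `A(s) = [[A₁(s), A₃(s)], [A₄(s), A₂(s)]]`. -/
def matA (p sr : ℕ → ℕ → ℝ) (N : ℕ) (r s : ℝ) :
    Matrix (Fin N ⊕ Fin N) (Fin N ⊕ Fin N) ℝ :=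
  Matrix.fromBlocks (matA1 p sr N r s) (matA3 p sr N r s) (matA4 p sr N r s) (matA2 p sr N r s)

/-- `p̲ = min_{(i,j) ∈ G₂} p_{i,j}`. -/
def pMin (p : ℕ → ℕ → ℝ) (N : ℕ) : ℝ :=
  sInf {x | ∃ i ∈ Finset.Icc 1 (2 * N), ∃ j ∈ Finset.Icc 1 (2 * N), 0 < p i j ∧ x = p i j}

/-- `p̄ = max_{(i,j) ∈ G₂} p_{i,j}`. -/
def pMax (p : ℕ → ℕ → ℝ) (N : ℕ) : ℝ :=
  sSup {x | ∃ i ∈ Finset.Icc 1 (2 * N), ∃ j ∈ Finset.Icc 1 (2 * N), 0 < p i j ∧ x = p i j}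

/-- `s̲ = min_{(i,j) ∈ 𝒮₂} s_{i,j}`. -/
def sMin (p sr : ℕ → ℕ → ℝ) (N : ℕ) : ℝ :=
  sInf {x | ∃ i ∈ Finset.Icc 1 N, ∃ j ∈ Finset.Icc 1 N, isSword p N [i, j] ∧ x = sr i j}

/-- `s̄ = max_{(i,j) ∈ 𝒮₂} s_{i,j}`. -/
def sMax (p sr : ℕ → ℕ → ℝ) (N : ℕ) : ℝ :=
  sSup {x | ∃ i ∈ Finset.Icc 1 N, ∃ j ∈ Finset.Icc 1 N, isSword p N [i, j] ∧ x = sr i j}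

/-- `χ̲ = min_{1 ≤ i ≤ 2N} χ_i`. -/
def chiMin (χ : ℕ → ℝ) (N : ℕ) : ℝ := sInf {x | ∃ i ∈ Finset.Icc 1 (2 * N), x = χ i}

/-- `χ̄ = max_{1 ≤ i ≤ 2N} χ_i`. -/
def chiMax (χ : ℕ → ℝ) (N : ℕ) : ℝ := sSup {x | ∃ i ∈ Finset.Icc 1 (2 * N), x = χ i}

/-- `t` satisfies the defining property of `t_r`:
`(1/n) log Σ_{σ ∈ 𝒮_n} ℰ_r(σ)^{t/(t+r)} → 0`. -/
def trCond (p : ℕ → ℕ → ℝ) (χ : ℕ → ℝ) (sr : ℕ → ℕ → ℝ) (N : ℕ) (r t : ℝ) : Prop :=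
  0 < t ∧
    Tendsto (fun n : ℕ => (n : ℝ)⁻¹ *
      Real.log (∑ σ ∈ Sn p N n, Er p χ sr N r σ ^ (t / (t + r)))) atTop (nhds 0)

/-- the initial word of length `n` of an infinite sequence. -/
def seqTake (x : ℕ → ℕ) (n : ℕ) : List ℕ := (List.range n).map x

/-- `Γ` is a finite maximal antichain among the words satisfying `W`, with respect to the
infinite sequences satisfying `Wseq`. -/
def isMaxAntichain (W : List ℕ → Prop) (Wseq : (ℕ → ℕ) → Prop) (Γ : Finset (List ℕ)) : Prop :=
  (∀ σ ∈ Γ, W σ) ∧ (∀ σ ∈ Γ, ∀ τ ∈ Γ, σ ≠ τ → ¬σ <+: τ) ∧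
    ∀ x : ℕ → ℕ, Wseq x → ∃ n : ℕ, 1 ≤ n ∧ seqTake x n ∈ Γ

/-- infinite admissible sequences with letters in `Ψ`. -/
def isH1seq (p : ℕ → ℕ → ℝ) (N : ℕ) (x : ℕ → ℕ) : Prop :=
  (∀ n, x n ∈ Finset.Icc 1 N) ∧ ∀ n, 0 < p (x n) (x (n + 1))

/-- infinite admissible sequences with letters in `Υ`. -/
def isH2seq (p : ℕ → ℕ → ℝ) (N : ℕ) (x : ℕ → ℕ) : Prop :=
  (∀ n, x n ∈ Finset.Icc (N + 1) (2 * N)) ∧ ∀ n, 0 < p (x n) (x (n + 1))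

/-- minimal length of a word in `Γ`. -/
def minLen (Γ : Finset (List ℕ)) : ℕ := sInf {n | ∃ σ ∈ Γ, σ.length = n}

/-- maximal length of a word in `Γ`. -/
def maxLen (Γ : Finset (List ℕ)) : ℕ := sSup {n | ∃ σ ∈ Γ, σ.length = n}

/-- `Λ_{k,r} = {σ ∈ 𝒮^* : ℰ_r(σ) < c₁^k ≤ ℰ_r(σ^♭)}`. -/
def LamSet (p : ℕ → ℕ → ℝ) (χ : ℕ → ℝ) (sr : ℕ → ℕ → ℝ) (N : ℕ) (r c1 : ℝ) (k : ℕ) :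
    Set (List ℕ) :=
  {σ | isSword p N σ ∧ Er p χ sr N r σ < c1 ^ k ∧ c1 ^ k ≤ Er p χ sr N r σ.dropLast}

/-- `ℒ(σ) = {σ, σ⁺} ∪ {σ|_h ∗ (σ_{h+1}⁺, …, σ_n⁺) : 1 ≤ h ≤ n − 1}`. -/
def Lset (N : ℕ) (σ : List ℕ) : Finset (List ℕ) :=
  (Finset.range (σ.length + 1)).image fun h =>
    σ.take h ++ (σ.drop h).map (fun x => x + N)

section AuxLemmas

open List

variable {w : ℕ → ℕ → ℝ}

lemma pword_nil (p : ℕ → ℕ → ℝ) : pword p [] = 1 := rfl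
lemma pword_single (p : ℕ → ℕ → ℝ) (a : ℕ) : pword p [a] = 1 := rfl
lemma pword_cons₂ (p : ℕ → ℕ → ℝ) (a b : ℕ) (t : List ℕ) :
    pword p (a :: b :: t) = p a b * pword p (b :: t) := rfl

lemma sword_eq_pword (sr : ℕ → ℕ → ℝ) : ∀ l : List ℕ, sword sr l = pword sr l
  | [] => rfl
  | [_] => rfl
  | a :: b :: t => by
      show sr a b * sword sr (b :: t) = _
      rw [sword_eq_pword sr (b :: t), pword_cons₂]

lemma pword_nonneg' : ∀ {l : List ℕ}, l.Chain' (fun i j => 0 ≤ w i j) → 0 ≤ pword w l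
  | [], _ => zero_le_one
  | [_], _ => zero_le_one
  | a :: b :: t, h =>
      mul_nonneg (isChain_cons_cons.mp h).1 (pword_nonneg' (isChain_cons_cons.mp h).2)

lemma pword_pos : ∀ {l : List ℕ}, l.Chain' (fun i j => 0 < w i j) → 0 < pword w l
  | [], _ => one_pos
  | [_], _ => one_pos
  | a :: b :: t, h =>
      mul_pos (isChain_cons_cons.mp h).1 (pword_pos (isChain_cons_cons.mp h).2)

lemma pword_le_one : ∀ {l : List ℕ}, l.Chain' (fun i j => 0 ≤ w i j ∧ w i j ≤ 1) →
    pword w l ≤ 1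
  | [], _ => le_refl 1
  | [_], _ => le_refl 1
  | a :: b :: t, h => by
      obtain ⟨⟨h0, h1⟩, ht⟩ := isChain_cons_cons.mp h
      have hnn : 0 ≤ pword w (b :: t) := pword_nonneg' (ht.imp fun _ _ h => h.1)
      calc w a b * pword w (b :: t) ≤ 1 * 1 :=
            mul_le_mul h1 (pword_le_one ht) hnn zero_le_one
        _ = 1 := one_mul 1

lemma pword_ge {m : ℝ} (hm : 0 ≤ m) : ∀ {l : List ℕ}, l.Chain' (fun i j => m ≤ w i j) →
    m ^ (l.length - 1) ≤ pword w l
  | [], _ => by simp [pword_nil]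
  | [_], _ => by simp [pword_single]
  | a :: b :: t, h => by
      obtain ⟨h1, ht⟩ := isChain_cons_cons.mp h
      have ih := pword_ge hm ht
      have hl : (a :: b :: t).length - 1 = ((b :: t).length - 1) + 1 := by simp
      rw [hl, pow_succ, pword_cons₂, mul_comm (m ^ ((b :: t).length - 1)) m]
      exact mul_le_mul h1 ih (pow_nonneg hm _) (hm.trans h1)

lemma pword_append (p : ℕ → ℕ → ℝ) : ∀ {u : List ℕ} (v : List ℕ), u ≠ [] → v ≠ [] →
    pword p (u ++ v) = pword p u * p (u.getLastD 0) (v.headD 0) * pword p v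
  | [], _, h, _ => absurd rfl h
  | [a], v, _, hv => by
      cases v with
      | nil => exact absurd rfl hv
      | cons c v' => simp [pword_single, pword_cons₂]
  | a :: b :: u', v, _, hv => by
      have ih := pword_append p (u := b :: u') v (by simp) hv
      show p a b * pword p ((b :: u') ++ v) = _
      rw [ih, List.getLastD_cons (a := 0) (b := a), List.getLastD_cons (a := a) (b := b), List.getLastD_cons (a := 0) (b := b), pword_cons₂]
      ring

end AuxLemmas
lemma mem_lifts {N : ℕ} : ∀ (σ τ : List ℕ),
    τ ∈ lifts N σ ↔ List.Forall₂ (fun i x => x = i ∨ x = i + N) σ τ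
  | [], τ => by
      simp [lifts, List.forall₂_nil_left_iff, eq_comm]
  | i :: t, τ => by
      simp only [lifts, Finset.mem_biUnion, Finset.mem_insert, Finset.mem_singleton,
        List.forall₂_cons_left_iff]
      constructor
      · rintro ⟨l, hl, rfl | rfl⟩
        · exact ⟨i, l, Or.inl rfl, (mem_lifts t l).1 hl, rfl⟩
        · exact ⟨i + N, l, Or.inr rfl, (mem_lifts t l).1 hl, rfl⟩
      · rintro ⟨x, l, hx, hl, rfl⟩
        refine ⟨l, (mem_lifts t l).2 hl, ?_⟩
        rcases hx with rfl | rfl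
        · exact Or.inl rfl
        · exact Or.inr rfl

lemma self_mem_lifts {N : ℕ} (σ : List ℕ) : σ ∈ lifts N σ :=
  (mem_lifts σ σ).2 (List.forall₂_same.2 fun _ _ => Or.inl rfl)

lemma length_of_mem_lifts {N : ℕ} {σ τ : List ℕ} (h : τ ∈ lifts N σ) :
    τ.length = σ.length :=
  (((mem_lifts σ τ).1 h).length_eq).symm

lemma sum_lifts_cons {N : ℕ} (hN : 0 < N) (f : List ℕ → ℝ) (a : ℕ) (t : List ℕ) :
    ∑ τ ∈ lifts N (a :: t), f τ = ∑ l ∈ lifts N t, (f (a :: l) + f ((a + N) :: l)) := by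
  have hd : (↑(lifts N t) : Set (List ℕ)).PairwiseDisjoint
      (fun l => ({a :: l, (a + N) :: l} : Finset (List ℕ))) := by
    intro x _ y _ hxy
    simp only [Finset.disjoint_left, Finset.mem_insert, Finset.mem_singleton]
    rintro z (rfl | rfl) (h | h) <;> simp_all
  rw [show lifts N (a :: t) = (lifts N t).biUnion (fun l => {a :: l, (a + N) :: l}) from rfl,
    Finset.sum_biUnion hd]
  refine Finset.sum_congr rfl fun l _ => ?_
  rw [Finset.sum_pair (by simp; omega)]

lemma sum_lifts_append {N : ℕ} (hN : 0 < N) : ∀ (u v : List ℕ) (f : List ℕ → ℝ),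
    ∑ τ ∈ lifts N (u ++ v), f τ = ∑ τ' ∈ lifts N u, ∑ τ'' ∈ lifts N v, f (τ' ++ τ'')
  | [], v, f => by simp [lifts]
  | a :: u', v, f => by
      calc ∑ τ ∈ lifts N ((a :: u') ++ v), f τ
          = ∑ l ∈ lifts N (u' ++ v), (f (a :: l) + f ((a + N) :: l)) := by
            rw [List.cons_append, sum_lifts_cons hN]
        _ = ∑ τ' ∈ lifts N u', ∑ τ'' ∈ lifts N v,
              (f (a :: (τ' ++ τ'')) + f ((a + N) :: (τ' ++ τ''))) :=
            sum_lifts_append hN u' v _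
        _ = ∑ τ' ∈ lifts N u', (∑ τ'' ∈ lifts N v, f ((a :: τ') ++ τ'')
              + ∑ τ'' ∈ lifts N v, f (((a + N) :: τ') ++ τ'')) := by
            refine Finset.sum_congr rfl fun τ' _ => ?_
            rw [← Finset.sum_add_distrib]
            simp [List.cons_append]
        _ = ∑ τ' ∈ lifts N (a :: u'), ∑ τ'' ∈ lifts N v, f (τ' ++ τ'') := by
            rw [sum_lifts_cons hN (fun τ' => ∑ τ'' ∈ lifts N v, f (τ' ++ τ''))]

lemma card_lifts_le {N : ℕ} : ∀ σ : List ℕ, (lifts N σ).card ≤ 2 ^ σ.length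
  | [] => by simp [lifts]
  | a :: t => by
      refine le_trans Finset.card_biUnion_le ?_
      calc ∑ l ∈ lifts N t, ({a :: l, (a + N) :: l} : Finset (List ℕ)).card
          ≤ ∑ _l ∈ lifts N t, 2 :=
            Finset.sum_le_sum fun l _ => (Finset.card_insert_le _ _).trans (by simp)
        _ = (lifts N t).card * 2 := by rw [Finset.sum_const, smul_eq_mul]
        _ ≤ 2 ^ t.length * 2 := Nat.mul_le_mul_right 2 (card_lifts_le t)
        _ = 2 ^ (a :: t).length := by rw [List.length_cons, pow_succ]

lemma forall₂_getLastD {R : ℕ → ℕ → Prop} :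
    ∀ {σ τ : List ℕ}, List.Forall₂ R σ τ → ∀ d d', R d d' → R (σ.getLastD d) (τ.getLastD d')
  | _, _, List.Forall₂.nil, d, d', hd => hd
  | _, _, List.Forall₂.cons (a := a) (b := b) hab h, d, d', _ => by
      rw [List.getLastD_cons (a := d) (b := a), List.getLastD_cons (a := d') (b := b)]
      exact forall₂_getLastD h a b hab

lemma forall₂_headD {R : ℕ → ℕ → Prop} {σ τ : List ℕ} (h : List.Forall₂ R σ τ)
    (d d' : ℕ) (hd : R d d') : R (σ.headD d) (τ.headD d') := by
  cases h <;> simpa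

lemma forall₂_mem_right {R : ℕ → ℕ → Prop} :
    ∀ {σ τ : List ℕ}, List.Forall₂ R σ τ → ∀ y ∈ τ, ∃ x ∈ σ, R x y
  | _, _, List.Forall₂.nil, y, hy => absurd hy List.not_mem_nil
  | _, _, List.Forall₂.cons (a := a) hab h, y, hy => by
      rcases List.mem_cons.mp hy with rfl | hy
      · exact ⟨a, List.mem_cons_self, hab⟩
      · obtain ⟨x, hx, hxy⟩ := forall₂_mem_right h y hy
        exact ⟨x, List.mem_cons_of_mem _ hx, hxy⟩

lemma chain'_transfer {R S T : ℕ → ℕ → Prop}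
    (key : ∀ a b a' b', R a a' → R b b' → S a b → T a' b') :
    ∀ {σ τ : List ℕ}, List.Forall₂ R σ τ → σ.Chain' S → τ.Chain' T := by
  intro σ τ h
  induction h with
  | nil => exact fun _ => List.isChain_nil
  | cons hab htail ih =>
      intro hc
      cases htail with
      | nil => exact List.isChain_singleton _
      | cons hab2 h2 =>
          have hc' := List.isChain_cons_cons.mp hc
          exact List.isChain_cons_cons.2
            ⟨key _ _ _ _ hab hab2 hc'.1, ih hc'.2⟩

lemma head?_eq_headD : ∀ {l : List ℕ}, l ≠ [] → l.head? = some (l.headD 0)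
  | [], h => absurd rfl h
  | a :: t, _ => rfl

lemma getLast?_eq_getLastD : ∀ {l : List ℕ}, l ≠ [] → l.getLast? = some (l.getLastD 0)
  | [], h => absurd rfl h
  | [a], _ => rfl
  | a :: b :: t, _ => by
      rw [List.getLast?_cons_cons, getLast?_eq_getLastD (l := b :: t) (by simp),
        List.getLastD_cons (a := 0) (b := a), List.getLastD_cons (a := 0) (b := b), List.getLastD_cons (a := a) (b := b)]

lemma headD_append {l l' : List ℕ} (h : l ≠ []) : (l ++ l').headD 0 = l.headD 0 := by
  cases l with
  | nil => exact absurd rfl h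
  | cons a t => rfl

lemma chain'_glue {R : ℕ → ℕ → Prop} {u v : List ℕ} {a : ℕ} (hu : u.Chain' R)
    (ha : u.getLast? = some a) (hw : (a :: v).Chain' R) : (u ++ v).Chain' R := by
  refine List.isChain_append.mpr ?_
  refine ⟨hu, (List.isChain_cons.mp hw).2, fun x hx y hy => ?_⟩
  rw [ha, Option.mem_some_iff] at hx
  subst hx
  exact (List.isChain_cons.mp hw).1 y hy

lemma mem_wordsOfLen {S : Finset ℕ} : ∀ {n : ℕ} {l : List ℕ},
    l ∈ wordsOfLen S n ↔ l.length = n ∧ ∀ x ∈ l, x ∈ S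
  | 0, l => by
      simp only [wordsOfLen, Finset.mem_singleton, List.length_eq_zero_iff]
      exact ⟨fun h => ⟨h, by rintro x hx; rw [h] at hx; simp at hx⟩, fun h => h.1⟩
  | n + 1, l => by
      simp only [wordsOfLen, Finset.mem_biUnion, Finset.mem_image]
      constructor
      · rintro ⟨t, ht, a, ha, rfl⟩
        obtain ⟨hlen, hmem⟩ := (mem_wordsOfLen (n := n)).1 ht
        refine ⟨by simp [hlen], fun x hx => ?_⟩
        rcases List.mem_cons.mp hx with rfl | hx
        · exact ha
        · exact hmem x hx
      · rintro ⟨hlen, hmem⟩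
        cases l with
        | nil => simp at hlen
        | cons a t =>
            refine ⟨t, (mem_wordsOfLen (n := n)).2 ⟨by simpa using hlen,
              fun x hx => hmem x (List.mem_cons_of_mem _ hx)⟩, a,
              hmem a List.mem_cons_self, rfl⟩
lemma getLastD_mem : ∀ {l : List ℕ}, l ≠ [] → l.getLastD 0 ∈ l
  | [a], _ => by simp
  | a :: b :: t, _ => by
      rw [List.getLastD_cons (a := 0) (b := a), List.getLastD_cons (a := a) (b := b), ← List.getLastD_cons (a := 0) (b := b)]
      exact List.mem_cons_of_mem _ (getLastD_mem (by simp))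

lemma headD_mem : ∀ {l : List ℕ}, l ≠ [] → l.headD 0 ∈ l
  | a :: t, _ => List.mem_cons_self (a := a) (l := t)
  | [], h => absurd rfl h

lemma ne_nil_of_mem_lifts {N : ℕ} {σ τ : List ℕ} (hσ : σ ≠ []) (h : τ ∈ lifts N σ) :
    τ ≠ [] := by
  have := length_of_mem_lifts h
  intro hτ
  rw [hτ] at this
  exact hσ (List.length_eq_zero_iff.mp this.symm)

/-- **Lemma 5.2.** Assume (A2), (A4) and (A5). For every `s > 0` there exist
`g₁(s), g₂(s) > 0` with `g₁ T_n(s) T_l(s) ≤ T_{n+l}(s) ≤ g₂ T_n(s) T_l(s)` for all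
`n, l ∈ ℕ`, where `T_n(s) = Σ_{σ ∈ 𝒮_n} ℰ_r(σ)^s`. -/
theorem stmt18
    (N q : ℕ) (hN : 2 ≤ N) (hq : 1 ≤ q) (r : ℝ) (hr : 0 < r)
    (p : ℕ → ℕ → ℝ) (χ : ℕ → ℝ)
    (hp0 : ∀ i j, 0 ≤ p i j)
    (hpsupp : ∀ i j, 0 < p i j → i ∈ Finset.Icc 1 (2 * N) ∧ j ∈ Finset.Icc 1 (2 * N))
    (hpsum : ∀ i ∈ Finset.Icc 1 (2 * N), ∑ j ∈ Finset.Icc 1 (2 * N), p i j = 1)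
    (hχpos : ∀ i ∈ Finset.Icc 1 (2 * N), 0 < χ i)
    (hχsum : ∑ i ∈ Finset.Icc 1 (2 * N), χ i = 1)
    (sr : ℕ → ℕ → ℝ)
    (T : ℕ → ℕ → EuclideanSpace ℝ (Fin q) → EuclideanSpace ℝ (Fin q))
    (J : ℕ → Set (EuclideanSpace ℝ (Fin q)))
    (hTinv : ∀ i ∈ Finset.Icc 1 N, ∀ j ∈ Finset.Icc 1 N, ∀ a b : ℕ,
      (a = i ∨ a = i + N) → (b = j ∨ b = j + N) → 0 < p a b →
      T a b = T i j ∧ sr a b = sr i j)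
    (hsim : ∀ i ∈ Finset.Icc 1 N, ∀ j ∈ Finset.Icc 1 N, isSword p N [i, j] →
      0 < sr i j ∧ sr i j < 1 ∧ ∀ x y, dist (T i j x) (T i j y) = sr i j * dist x y)
    (hJcpt : ∀ i ∈ Finset.Icc 1 N,
      IsCompact (J i) ∧ (J i).Nonempty ∧ closure (interior (J i)) = J i ∧
        Metric.diam (J i) = 1)
    (hJdisj : ∀ i ∈ Finset.Icc 1 N, ∀ j ∈ Finset.Icc 1 N, i ≠ j → Disjoint (J i) (J j))
    (hJplus : ∀ i ∈ Finset.Icc 1 N, J (i + N) = J i)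
    (hnest : ∀ i ∈ Finset.Icc 1 N, ∀ j ∈ Finset.Icc 1 N, isSword p N [i, j] →
      T i j '' J j ⊆ J i)
    (hTdisj : ∀ i ∈ Finset.Icc 1 N, ∀ j ∈ Finset.Icc 1 N, ∀ l ∈ Finset.Icc 1 N,
      isSword p N [i, j] → isSword p N [i, l] → j ≠ l →
      Disjoint (T i j '' J j) (T i l '' J l))
    (hA2 : A2 p N) (hA4 : A4 p N) (hA5 : A5 p N)
    (s : ℝ) (hs : 0 < s) :
    ∃ g1 g2 : ℝ, 0 < g1 ∧ 0 < g2 ∧ ∀ n l : ℕ, 1 ≤ n → 1 ≤ l →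
      g1 * (∑ σ ∈ Sn p N n, Er p χ sr N r σ ^ s) *
            (∑ σ ∈ Sn p N l, Er p χ sr N r σ ^ s) ≤
          (∑ σ ∈ Sn p N (n + l), Er p χ sr N r σ ^ s) ∧
        (∑ σ ∈ Sn p N (n + l), Er p χ sr N r σ ^ s) ≤
          g2 * (∑ σ ∈ Sn p N n, Er p χ sr N r σ ^ s) *
            (∑ σ ∈ Sn p N l, Er p χ sr N r σ ^ s) := by
  classical
  have hN0 : 0 < N := by omega
  -- index sets
  have hΨΩ : Finset.Icc 1 N ⊆ Finset.Icc 1 (2 * N) := by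
    intro x hx
    simp only [Finset.mem_Icc] at hx ⊢
    omega
  have hplusΩ : ∀ i ∈ Finset.Icc 1 N, i + N ∈ Finset.Icc 1 (2 * N) := by
    intro i hi
    simp only [Finset.mem_Icc] at hi ⊢
    omega
  have h1Ψ : (1 : ℕ) ∈ Finset.Icc 1 N := by
    simp only [Finset.mem_Icc]
    omega
  have hΩne : (Finset.Icc 1 (2 * N)).Nonempty := ⟨1, hΨΩ h1Ψ⟩
  -- χ constants
  obtain ⟨cm, hcm, hcmle⟩ : ∃ c : ℝ, 0 < c ∧ ∀ i ∈ Finset.Icc 1 (2 * N), c ≤ χ i :=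
    ⟨(Finset.Icc 1 (2 * N)).inf' hΩne χ,
      (Finset.lt_inf'_iff hΩne).2 fun i hi => hχpos i hi,
      fun i hi => Finset.inf'_le χ hi⟩
  obtain ⟨cM, hcMge⟩ : ∃ c : ℝ, ∀ i ∈ Finset.Icc 1 (2 * N), χ i ≤ c :=
    ⟨(Finset.Icc 1 (2 * N)).sup' hΩne χ, fun i hi => Finset.le_sup' χ hi⟩
  have hcmM : cm ≤ cM := le_trans (hcmle 1 (hΨΩ h1Ψ)) (hcMge 1 (hΨΩ h1Ψ))
  have hcM : 0 < cM := lt_of_lt_of_le hcm hcmM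
  -- an edge exists
  have hedge1 : ∃ j ∈ Finset.Icc 1 N, 0 < p 1 j := by
    have h2 := (hA2 1 h1Ψ).1
    have : ((Finset.Icc 1 N).filter fun j => 0 < p 1 j).Nonempty := by
      rw [← Finset.card_pos]
      omega
    obtain ⟨j, hj⟩ := this
    exact ⟨j, (Finset.mem_filter.mp hj).1, (Finset.mem_filter.mp hj).2⟩
  -- p constants
  have hEΩne : (((Finset.Icc 1 (2 * N)) ×ˢ (Finset.Icc 1 (2 * N))).filter
      fun q : ℕ × ℕ => 0 < p q.1 q.2).Nonempty := by
    obtain ⟨j, hj, hpj⟩ := hedge1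
    exact ⟨(1, j), Finset.mem_filter.2 ⟨Finset.mem_product.2 ⟨hΨΩ h1Ψ, hΨΩ hj⟩, hpj⟩⟩
  obtain ⟨pm, hpm, hpmle⟩ : ∃ c : ℝ, 0 < c ∧ ∀ x y, x ∈ Finset.Icc 1 (2 * N) →
      y ∈ Finset.Icc 1 (2 * N) → 0 < p x y → c ≤ p x y := by
    refine ⟨(((Finset.Icc 1 (2 * N)) ×ˢ (Finset.Icc 1 (2 * N))).filter
      fun q : ℕ × ℕ => 0 < p q.1 q.2).inf' hEΩne (fun q => p q.1 q.2), ?_, ?_⟩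
    · rw [Finset.lt_inf'_iff]
      intro q' hq'
      exact (Finset.mem_filter.mp hq').2
    · intro x y hx hy hxy
      exact Finset.inf'_le (b := (x, y)) (fun q : ℕ × ℕ => p q.1 q.2)
        (by simp only [Finset.mem_filter, Finset.mem_product]; exact ⟨⟨hx, hy⟩, hxy⟩)
  have hp_le_one : ∀ x y, 0 < p x y → p x y ≤ 1 := by
    intro x y hxy
    obtain ⟨hx, hy⟩ := hpsupp x y hxy
    calc p x y ≤ ∑ j ∈ Finset.Icc 1 (2 * N), p x j :=
          Finset.single_le_sum (fun j _ => hp0 x j) hy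
      _ = 1 := hpsum x hx
  have hpm1 : pm ≤ 1 := by
    obtain ⟨j, hj, hpj⟩ := hedge1
    exact le_trans (hpmle 1 j (hΨΩ h1Ψ) (hΨΩ hj) hpj) (hp_le_one 1 j hpj)
  -- (i, j) with a positive edge is an 𝒮₂-pair
  have hS2 : ∀ i j, i ∈ Finset.Icc 1 N → j ∈ Finset.Icc 1 N → 0 < p i j →
      isSword p N [i, j] := by
    intro i j hi hj hij
    refine ⟨⟨by simp, ?_⟩, ⟨[i, j], ?_⟩⟩
    · intro x hx
      rcases List.mem_cons.mp hx with rfl | hx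
      · exact hi
      · rcases List.mem_cons.mp hx with rfl | hx
        · exact hj
        · simp at hx
    · rw [Gam, Finset.mem_filter]
      exact ⟨self_mem_lifts _, List.isChain_pair.2 hij⟩
  -- sr constants
  have hEfne : (((Finset.Icc 1 N) ×ˢ (Finset.Icc 1 N)).filter
      fun q : ℕ × ℕ => 0 < p q.1 q.2).Nonempty := by
    obtain ⟨j, hj, hpj⟩ := hedge1
    exact ⟨(1, j), Finset.mem_filter.2 ⟨Finset.mem_product.2 ⟨h1Ψ, hj⟩, hpj⟩⟩
  obtain ⟨sm, hsm, hsrf'⟩ : ∃ c : ℝ, 0 < c ∧ ∀ x y, x ∈ Finset.Icc 1 N →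
      y ∈ Finset.Icc 1 N → 0 < p x y → c ≤ sr x y := by
    refine ⟨(((Finset.Icc 1 N) ×ˢ (Finset.Icc 1 N)).filter
      fun q : ℕ × ℕ => 0 < p q.1 q.2).inf' hEfne (fun q => sr q.1 q.2), ?_, ?_⟩
    · rw [Finset.lt_inf'_iff]
      intro q' hq'
      obtain ⟨hmem, hpq⟩ := Finset.mem_filter.mp hq'
      obtain ⟨h1, h2⟩ := Finset.mem_product.mp hmem
      exact (hsim q'.1 h1 q'.2 h2 (hS2 q'.1 q'.2 h1 h2 hpq)).1
    · intro x y hx hy hxy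
      exact Finset.inf'_le (b := (x, y)) (fun q : ℕ × ℕ => sr q.1 q.2)
        (by simp only [Finset.mem_filter, Finset.mem_product]; exact ⟨⟨hx, hy⟩, hxy⟩)
  have hsrf : ∀ i j, i ∈ Finset.Icc 1 N → j ∈ Finset.Icc 1 N → 0 < p i j →
      0 < sr i j ∧ sr i j ≤ 1 ∧ sm ≤ sr i j := by
    intro i j hi hj hij
    obtain ⟨h1, h2, _⟩ := hsim i hi j hj (hS2 i j hi hj hij)
    exact ⟨h1, le_of_lt h2, hsrf' i j hi hj hij⟩
  have hsm1 : sm ≤ 1 := by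
    obtain ⟨j, hj, hpj⟩ := hedge1
    exact le_trans (hsrf 1 j h1Ψ hj hpj).2.2 (hsrf 1 j h1Ψ hj hpj).2.1
  -- A4 consequences
  have edge_lift : ∀ i j x y, i ∈ Finset.Icc 1 N → j ∈ Finset.Icc 1 N →
      (x = i ∨ x = i + N) → (y = j ∨ y = j + N) → 0 < p i j → 0 < p x y := by
    intro i j x y hi hj hx hy hij
    rcases hA4 i hi j hj with ⟨h1, _, _, _⟩ | ⟨h1, h2, h3, h4⟩
    · exact absurd h1 (ne_of_gt hij)
    · rcases hx with rfl | rfl <;> rcases hy with rfl | rfl <;> assumption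
  have edge_unlift : ∀ i j x y, i ∈ Finset.Icc 1 N → j ∈ Finset.Icc 1 N →
      (x = i ∨ x = i + N) → (y = j ∨ y = j + N) → 0 < p x y → 0 < p i j := by
    intro i j x y hi hj hx hy hxy
    rcases hA4 i hi j hj with ⟨h1, h2, h3, h4⟩ | ⟨h1, _, _, _⟩
    · exfalso
      rcases hx with rfl | rfl <;> rcases hy with rfl | rfl <;> linarith
    · exact h1
  -- Forall₂ bundling of lift membership with Ψ-letters
  have hForall : ∀ σ τ : List ℕ, (∀ x ∈ σ, x ∈ Finset.Icc 1 N) → τ ∈ lifts N σ →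
      List.Forall₂ (fun i x => i ∈ Finset.Icc 1 N ∧ (x = i ∨ x = i + N)) σ τ := by
    intro σ τ hσ hτ
    exact (List.forall₂_and_left _ _).2 ⟨hσ, (mem_lifts σ τ).1 hτ⟩
  -- letters of lifts lie in Ω
  have lift_mem_Ω : ∀ σ τ : List ℕ, (∀ x ∈ σ, x ∈ Finset.Icc 1 N) → τ ∈ lifts N σ →
      ∀ y ∈ τ, y ∈ Finset.Icc 1 (2 * N) := by
    intro σ τ hσ hτ y hy
    obtain ⟨x, hx, hxΨ, hy'⟩ := forall₂_mem_right (hForall σ τ hσ hτ) y hy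
    rcases hy' with rfl | rfl
    · exact hΨΩ hxΨ
    · exact hplusΩ x hxΨ
  -- chains transfer up to lifts
  have lift_chain : ∀ σ τ : List ℕ, (∀ x ∈ σ, x ∈ Finset.Icc 1 N) → τ ∈ lifts N σ →
      σ.Chain' (edge p) → τ.Chain' (edge p) := by
    intro σ τ hσ hτ hch
    refine chain'_transfer ?_ (hForall σ τ hσ hτ) hch
    rintro a b a' b' ⟨ha, ha'⟩ ⟨hb, hb'⟩ hab
    exact edge_lift a b a' b' ha hb ha' hb' hab
  -- and down from lifts
  have unlift_chain : ∀ σ τ : List ℕ, (∀ x ∈ σ, x ∈ Finset.Icc 1 N) → τ ∈ lifts N σ →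
      τ.Chain' (edge p) → σ.Chain' (edge p) := by
    intro σ τ hσ hτ hch
    have hF : List.Forall₂ (fun x i => i ∈ Finset.Icc 1 N ∧ (x = i ∨ x = i + N)) τ σ :=
      (hForall σ τ hσ hτ).flip
    refine chain'_transfer ?_ hF hch
    rintro a b a' b' ⟨ha, ha'⟩ ⟨hb, hb'⟩ hab
    exact edge_unlift a' b' a b ha hb ha' hb' hab
  -- characterization of 𝒮-words
  have isSword_iff' : ∀ σ : List ℕ, isSword p N σ ↔
      (σ ≠ [] ∧ (∀ x ∈ σ, x ∈ Finset.Icc 1 N) ∧ σ.Chain' (edge p)) := by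
    intro σ
    constructor
    · rintro ⟨⟨hne, hΨ⟩, τ, hτ⟩
      rw [Gam, Finset.mem_filter] at hτ
      exact ⟨hne, hΨ, unlift_chain σ τ hΨ hτ.1 hτ.2⟩
    · rintro ⟨hne, hΨ, hch⟩
      exact ⟨⟨hne, hΨ⟩, ⟨σ, Finset.mem_filter.2 ⟨self_mem_lifts σ, hch⟩⟩⟩
  have Gam_eq : ∀ σ : List ℕ, (∀ x ∈ σ, x ∈ Finset.Icc 1 N) → σ.Chain' (edge p) →
      Gam p N σ = lifts N σ := by
    intro σ hΨ hch
    rw [Gam]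
    exact Finset.filter_true_of_mem fun τ hτ => lift_chain σ τ hΨ hτ hch
  have mem_Sn' : ∀ (n : ℕ) (σ : List ℕ), σ ∈ Sn p N n ↔ (σ.length = n ∧ isSword p N σ) := by
    intro n σ
    rw [Sn, Finset.mem_filter, mem_wordsOfLen]
    constructor
    · rintro ⟨⟨h1, _⟩, h3⟩
      exact ⟨h1, h3⟩
    · rintro ⟨h1, h3⟩
      exact ⟨⟨h1, h3.1.2⟩, h3⟩
  -- value chains on Ψ-words
  have chain_self : ∀ σ : List ℕ, (∀ x ∈ σ, x ∈ Finset.Icc 1 N) → σ.Chain' (edge p) →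
      σ.Chain' (fun i j => (0 < p i j ∧ p i j ≤ 1 ∧ pm ≤ p i j) ∧
        (0 < sr i j ∧ sr i j ≤ 1 ∧ sm ≤ sr i j)) := by
    intro σ hΨ hch
    have hF : List.Forall₂ (fun i x => i ∈ Finset.Icc 1 N ∧ x = i) σ σ :=
      List.forall₂_same.2 fun x hx => ⟨hΨ x hx, rfl⟩
    refine chain'_transfer ?_ hF hch
    rintro a b a' b' ⟨ha, rfl⟩ ⟨hb, rfl⟩ hab
    exact ⟨⟨hab, hp_le_one a' b' hab, hpmle a' b' (hΨΩ ha) (hΨΩ hb) hab⟩,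
      hsrf a' b' ha hb hab⟩
  -- value chains on lifted words
  have chain_lift_vals : ∀ τ : List ℕ, (∀ y ∈ τ, y ∈ Finset.Icc 1 (2 * N)) →
      τ.Chain' (edge p) → τ.Chain' (fun x y => 0 < p x y ∧ p x y ≤ 1 ∧ pm ≤ p x y) := by
    intro τ hΩ hch
    have hF : List.Forall₂ (fun x y => x ∈ Finset.Icc 1 (2 * N) ∧ y = x) τ τ :=
      List.forall₂_same.2 fun x hx => ⟨hΩ x hx, rfl⟩
    refine chain'_transfer ?_ hF hch
    rintro a b a' b' ⟨ha, rfl⟩ ⟨hb, rfl⟩ hab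
    exact ⟨hab, hp_le_one a' b' hab, hpmle a' b' ha (hpsupp a' b' hab).2 hab⟩
  -- facts about lifted words
  have lift_facts : ∀ σ τ : List ℕ, σ ≠ [] → (∀ x ∈ σ, x ∈ Finset.Icc 1 N) →
      σ.Chain' (edge p) → τ ∈ lifts N σ →
      (0 < χ (τ.headD 0) ∧ χ (τ.headD 0) ≤ cM ∧ cm ≤ χ (τ.headD 0)) ∧
        (0 < pword p τ ∧ pword p τ ≤ 1) := by
    intro σ τ hσ hΨ hch hτ
    have hτch := lift_chain σ τ hΨ hτ hch
    have hΩ := lift_mem_Ω σ τ hΨ hτ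
    have hhd : τ.headD 0 ∈ Finset.Icc 1 (2 * N) :=
      hΩ _ (headD_mem (ne_nil_of_mem_lifts hσ hτ))
    have hvals := chain_lift_vals τ hΩ hτch
    exact ⟨⟨hχpos _ hhd, hcMge _ hhd, hcmle _ hhd⟩,
      ⟨pword_pos (hvals.imp fun _ _ h => h.1),
        pword_le_one (hvals.imp fun _ _ h => ⟨h.1.le, h.2.1⟩)⟩⟩
  -- facts about the connecting edge between two lifts
  have link_facts : ∀ u v τ' τ'' : List ℕ, u ≠ [] → v ≠ [] →
      (∀ x ∈ u, x ∈ Finset.Icc 1 N) → (∀ x ∈ v, x ∈ Finset.Icc 1 N) →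
      τ' ∈ lifts N u → τ'' ∈ lifts N v → 0 < p (u.getLastD 0) (v.headD 0) →
      0 < p (τ'.getLastD 0) (τ''.headD 0) ∧ p (τ'.getLastD 0) (τ''.headD 0) ≤ 1 ∧
        pm ≤ p (τ'.getLastD 0) (τ''.headD 0) := by
    intro u v τ' τ'' hu hv hΨu hΨv hτ' hτ'' hab
    have ha : u.getLastD 0 ∈ Finset.Icc 1 N := hΨu _ (getLastD_mem hu)
    have hb : v.headD 0 ∈ Finset.Icc 1 N := hΨv _ (headD_mem hv)
    have hlast : τ'.getLastD 0 = u.getLastD 0 ∨ τ'.getLastD 0 = u.getLastD 0 + N :=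
      forall₂_getLastD ((mem_lifts u τ').1 hτ') 0 0 (Or.inl rfl)
    have hhead : τ''.headD 0 = v.headD 0 ∨ τ''.headD 0 = v.headD 0 + N :=
      forall₂_headD ((mem_lifts v τ'').1 hτ'') 0 0 (Or.inl rfl)
    have hpos := edge_lift _ _ _ _ ha hb hlast hhead hab
    have hτ'Ω : τ'.getLastD 0 ∈ Finset.Icc 1 (2 * N) :=
      lift_mem_Ω u τ' hΨu hτ' _ (getLastD_mem (ne_nil_of_mem_lifts hu hτ'))
    have hτ''Ω : τ''.headD 0 ∈ Finset.Icc 1 (2 * N) :=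
      lift_mem_Ω v τ'' hΨv hτ'' _ (headD_mem (ne_nil_of_mem_lifts hv hτ''))
    exact ⟨hpos, hp_le_one _ _ hpos, hpmle _ _ hτ'Ω hτ''Ω hpos⟩
  -- sword facts
  have sword_facts : ∀ σ : List ℕ, (∀ x ∈ σ, x ∈ Finset.Icc 1 N) → σ.Chain' (edge p) →
      0 < sword sr σ ∧ sword sr σ ≤ 1 ∧ sm ^ (σ.length - 1) ≤ sword sr σ := by
    intro σ hΨ hch
    have hvals := (chain_self σ hΨ hch).imp fun _ _ h => h.2
    rw [sword_eq_pword]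
    exact ⟨pword_pos (hvals.imp fun _ _ h => h.1),
      pword_le_one (hvals.imp fun _ _ h => ⟨h.1.le, h.2.1⟩),
      pword_ge hsm.le (hvals.imp fun _ _ h => h.2.2)⟩
  -- positivity of muJ
  have muJ_pos : ∀ σ : List ℕ, isSword p N σ → 0 < muJ p χ N σ := by
    intro σ hσ
    obtain ⟨hne, hΨ, hch⟩ := (isSword_iff' σ).1 hσ
    rw [muJ, Gam_eq σ hΨ hch]
    refine Finset.sum_pos (fun τ hτ => ?_) ⟨σ, self_mem_lifts σ⟩
    obtain ⟨⟨h1, _, _⟩, h2, _⟩ := lift_facts σ τ hne hΨ hch hτ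
    exact mul_pos h1 h2
  -- lower bound for muJ by its diagonal term
  have muJ_ge_self : ∀ σ : List ℕ, σ ≠ [] → (∀ x ∈ σ, x ∈ Finset.Icc 1 N) →
      σ.Chain' (edge p) → cm * pm ^ (σ.length - 1) ≤ muJ p χ N σ := by
    intro σ hne hΨ hch
    rw [muJ, Gam_eq σ hΨ hch]
    have hterm : cm * pm ^ (σ.length - 1) ≤ χ (σ.headD 0) * pword p σ := by
      have hhd : σ.headD 0 ∈ Finset.Icc 1 (2 * N) := hΨΩ (hΨ _ (headD_mem hne))
      have hpw : pm ^ (σ.length - 1) ≤ pword p σ :=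
        pword_ge hpm.le ((chain_self σ hΨ hch).imp fun _ _ h => h.1.2.2)
      exact mul_le_mul (hcmle _ hhd) hpw (pow_nonneg hpm.le _) (hχpos _ hhd).le
    refine le_trans hterm (Finset.single_le_sum (f := fun τ => χ (τ.headD 0) * pword p τ)
      (fun τ hτ => ?_) (self_mem_lifts σ))
    obtain ⟨⟨h1, _, _⟩, h2, _⟩ := lift_facts σ τ hne hΨ hch hτ
    exact (mul_pos h1 h2).le
  -- upper bound for muJ
  have muJ_le : ∀ σ : List ℕ, σ ≠ [] → (∀ x ∈ σ, x ∈ Finset.Icc 1 N) →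
      σ.Chain' (edge p) → muJ p χ N σ ≤ 2 ^ σ.length * cM := by
    intro σ hne hΨ hch
    rw [muJ, Gam_eq σ hΨ hch]
    calc ∑ τ ∈ lifts N σ, χ (τ.headD 0) * pword p τ
        ≤ ∑ _τ ∈ lifts N σ, cM := by
          refine Finset.sum_le_sum fun τ hτ => ?_
          obtain ⟨⟨h1, h2, _⟩, h3, h4⟩ := lift_facts σ τ hne hΨ hch hτ
          calc χ (τ.headD 0) * pword p τ ≤ cM * 1 := mul_le_mul h2 h4 h3.le hcM.le
            _ = cM := mul_one cM
      _ = ((lifts N σ).card : ℝ) * cM := by rw [Finset.sum_const, nsmul_eq_mul]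
      _ ≤ 2 ^ σ.length * cM := by
          refine mul_le_mul_of_nonneg_right ?_ hcM.le
          calc ((lifts N σ).card : ℝ) ≤ ((2 ^ σ.length : ℕ) : ℝ) :=
                Nat.cast_le.2 (card_lifts_le σ)
            _ = 2 ^ σ.length := by push_cast; ring
  -- Er basics
  have Er_eq : ∀ σ : List ℕ, σ ≠ [] → Er p χ sr N r σ = muJ p χ N σ * sword sr σ ^ r :=
    fun σ h => if_neg h
  have Er_pos : ∀ σ : List ℕ, isSword p N σ → 0 < Er p χ sr N r σ := by
    intro σ hσ
    obtain ⟨hne, hΨ, hch⟩ := (isSword_iff' σ).1 hσ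
    rw [Er_eq σ hne]
    exact mul_pos (muJ_pos σ hσ) (Real.rpow_pos_of_pos (sword_facts σ hΨ hch).1 r)
  have Er_le : ∀ σ : List ℕ, isSword p N σ → Er p χ sr N r σ ≤ 2 ^ σ.length * cM := by
    intro σ hσ
    obtain ⟨hne, hΨ, hch⟩ := (isSword_iff' σ).1 hσ
    rw [Er_eq σ hne]
    calc muJ p χ N σ * sword sr σ ^ r ≤ (2 ^ σ.length * cM) * 1 :=
          mul_le_mul (muJ_le σ hne hΨ hch)
            (Real.rpow_le_one (sword_facts σ hΨ hch).1.le (sword_facts σ hΨ hch).2.1 hr.le)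
            (Real.rpow_nonneg (sword_facts σ hΨ hch).1.le r) (by positivity)
      _ = 2 ^ σ.length * cM := mul_one _
  -- decomposition of an 𝒮-word into two pieces
  have split_isSword : ∀ u v : List ℕ, u ≠ [] → v ≠ [] → isSword p N (u ++ v) →
      isSword p N u ∧ isSword p N v ∧ 0 < p (u.getLastD 0) (v.headD 0) := by
    intro u v hu hv h
    obtain ⟨hne, hΨ, hch⟩ := (isSword_iff' _).1 h
    obtain ⟨hchu, hchv, hlink⟩ := List.isChain_append.mp hch
    have hΨu : ∀ x ∈ u, x ∈ Finset.Icc 1 N := fun x hx => hΨ x (List.mem_append_left v hx)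
    have hΨv : ∀ x ∈ v, x ∈ Finset.Icc 1 N := fun x hx => hΨ x (List.mem_append_right u hx)
    refine ⟨(isSword_iff' u).2 ⟨hu, hΨu, hchu⟩, (isSword_iff' v).2 ⟨hv, hΨv, hchv⟩, ?_⟩
    exact hlink _ (by rw [getLast?_eq_getLastD hu]; rfl) _ (by rw [head?_eq_headD hv]; rfl)
  -- the two key concatenation inequalities
  have Er_append_le : ∀ u v : List ℕ, u ≠ [] → v ≠ [] → isSword p N (u ++ v) →
      Er p χ sr N r (u ++ v) ≤ cm⁻¹ * (Er p χ sr N r u * Er p χ sr N r v) := by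
    intro u v hu hv h
    obtain ⟨hne, hΨ, hch⟩ := (isSword_iff' _).1 h
    obtain ⟨hsu, hsv, hab⟩ := split_isSword u v hu hv h
    obtain ⟨_, hΨu, hchu⟩ := (isSword_iff' u).1 hsu
    obtain ⟨_, hΨv, hchv⟩ := (isSword_iff' v).1 hsv
    have hswu := sword_facts u hΨu hchu
    have hswv := sword_facts v hΨv hchv
    have hsw := sword_facts (u ++ v) hΨ hch
    -- µJ estimate
    have h1 : muJ p χ N (u ++ v) ≤ cm⁻¹ * (muJ p χ N u * muJ p χ N v) := by
      rw [muJ, Gam_eq (u ++ v) hΨ hch, sum_lifts_append hN0, muJ, muJ,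
        Gam_eq u hΨu hchu, Gam_eq v hΨv hchv, Finset.sum_mul_sum, Finset.mul_sum]
      refine Finset.sum_le_sum fun τ' hτ' => ?_
      rw [Finset.mul_sum]
      refine Finset.sum_le_sum fun τ'' hτ'' => ?_
      have hτ'ne : τ' ≠ [] := ne_nil_of_mem_lifts hu hτ'
      have hτ''ne : τ'' ≠ [] := ne_nil_of_mem_lifts hv hτ''
      rw [headD_append hτ'ne, pword_append p (u := τ') τ'' hτ'ne hτ''ne]
      obtain ⟨⟨hχ1, _, _⟩, hpw1, hpw1'⟩ := lift_facts u τ' hu hΨu hchu hτ'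
      obtain ⟨⟨hχ2, _, hχ2'⟩, hpw2, hpw2'⟩ := lift_facts v τ'' hv hΨv hchv hτ''
      obtain ⟨hl1, hl2, _⟩ := link_facts u v τ' τ'' hu hv hΨu hΨv hτ' hτ'' hab
      have key : p (τ'.getLastD 0) (τ''.headD 0) * pword p τ''
          ≤ cm⁻¹ * (χ (τ''.headD 0) * pword p τ'') := by
        calc p (τ'.getLastD 0) (τ''.headD 0) * pword p τ'' ≤ 1 * pword p τ'' :=
              mul_le_mul_of_nonneg_right hl2 hpw2.le
          _ = pword p τ'' := one_mul _
          _ ≤ cm⁻¹ * (χ (τ''.headD 0) * pword p τ'') := by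
              rw [← mul_assoc]
              nth_rewrite 1 [← one_mul (pword p τ'')]
              refine mul_le_mul_of_nonneg_right ?_ hpw2.le
              rw [← inv_mul_cancel₀ (ne_of_gt hcm)]
              exact mul_le_mul_of_nonneg_left hχ2' (by positivity)
      calc χ (τ'.headD 0) * (pword p τ' * p (τ'.getLastD 0) (τ''.headD 0) * pword p τ'')
          = (χ (τ'.headD 0) * pword p τ') * (p (τ'.getLastD 0) (τ''.headD 0) * pword p τ'') := by
            ring
        _ ≤ (χ (τ'.headD 0) * pword p τ') * (cm⁻¹ * (χ (τ''.headD 0) * pword p τ'')) :=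
            mul_le_mul_of_nonneg_left key (by positivity)
        _ = cm⁻¹ * (χ (τ'.headD 0) * pword p τ' * (χ (τ''.headD 0) * pword p τ'')) := by
            ring
    -- sword estimate
    have h2 : sword sr (u ++ v) ^ r ≤ sword sr u ^ r * sword sr v ^ r := by
      rw [← Real.mul_rpow hswu.1.le hswv.1.le]
      refine Real.rpow_le_rpow hsw.1.le ?_ hr.le
      rw [sword_eq_pword sr (u ++ v), pword_append sr (u := u) v hu hv,
        ← sword_eq_pword, ← sword_eq_pword]
      have hsrab := hsrf _ _ (hΨu _ (getLastD_mem hu)) (hΨv _ (headD_mem hv)) hab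
      calc sword sr u * sr (u.getLastD 0) (v.headD 0) * sword sr v
          ≤ sword sr u * 1 * sword sr v := by
            refine mul_le_mul_of_nonneg_right ?_ hswv.1.le
            exact mul_le_mul_of_nonneg_left hsrab.2.1 hswu.1.le
        _ = sword sr u * sword sr v := by ring
    rw [Er_eq _ hne, Er_eq u hu, Er_eq v hv]
    calc muJ p χ N (u ++ v) * sword sr (u ++ v) ^ r
        ≤ (cm⁻¹ * (muJ p χ N u * muJ p χ N v)) * (sword sr u ^ r * sword sr v ^ r) := by
          refine mul_le_mul h1 h2 (Real.rpow_nonneg hsw.1.le r) ?_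
          have := muJ_pos u hsu
          have := muJ_pos v hsv
          positivity
      _ = cm⁻¹ * (muJ p χ N u * sword sr u ^ r * (muJ p χ N v * sword sr v ^ r)) := by ring
  have Er_append_ge : ∀ u v : List ℕ, u ≠ [] → v ≠ [] → isSword p N (u ++ v) →
      (pm * sm ^ r / cM) * (Er p χ sr N r u * Er p χ sr N r v) ≤ Er p χ sr N r (u ++ v) := by
    intro u v hu hv h
    obtain ⟨hne, hΨ, hch⟩ := (isSword_iff' _).1 h
    obtain ⟨hsu, hsv, hab⟩ := split_isSword u v hu hv h
    obtain ⟨_, hΨu, hchu⟩ := (isSword_iff' u).1 hsu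
    obtain ⟨_, hΨv, hchv⟩ := (isSword_iff' v).1 hsv
    have hswu := sword_facts u hΨu hchu
    have hswv := sword_facts v hΨv hchv
    have hsw := sword_facts (u ++ v) hΨ hch
    have h1 : (pm / cM) * (muJ p χ N u * muJ p χ N v) ≤ muJ p χ N (u ++ v) := by
      simp only [muJ]
      rw [Gam_eq (u ++ v) hΨ hch, Gam_eq u hΨu hchu, Gam_eq v hΨv hchv,
        sum_lifts_append hN0, Finset.sum_mul_sum, Finset.mul_sum]
      refine Finset.sum_le_sum fun τ' hτ' => ?_
      rw [Finset.mul_sum]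
      refine Finset.sum_le_sum fun τ'' hτ'' => ?_
      have hτ'ne : τ' ≠ [] := ne_nil_of_mem_lifts hu hτ'
      have hτ''ne : τ'' ≠ [] := ne_nil_of_mem_lifts hv hτ''
      rw [headD_append hτ'ne, pword_append p (u := τ') τ'' hτ'ne hτ''ne]
      obtain ⟨⟨hχ1, _, _⟩, hpw1, hpw1'⟩ := lift_facts u τ' hu hΨu hchu hτ'
      obtain ⟨⟨hχ2, hχ2le, _⟩, hpw2, hpw2'⟩ := lift_facts v τ'' hv hΨv hchv hτ''
      obtain ⟨hl1, hl2, hl3⟩ := link_facts u v τ' τ'' hu hv hΨu hΨv hτ' hτ'' hab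
      have k1 : χ (τ''.headD 0) * pword p τ'' ≤ cM * pword p τ'' :=
        mul_le_mul_of_nonneg_right hχ2le hpw2.le
      calc pm / cM * (χ (τ'.headD 0) * pword p τ' * (χ (τ''.headD 0) * pword p τ''))
          ≤ pm / cM * (χ (τ'.headD 0) * pword p τ' * (cM * pword p τ'')) := by
            refine mul_le_mul_of_nonneg_left
              (mul_le_mul_of_nonneg_left k1 (by positivity)) (by positivity)
        _ = (χ (τ'.headD 0) * pword p τ') * (pm * pword p τ'') := by
            field_simp
        _ ≤ (χ (τ'.headD 0) * pword p τ') * (p (τ'.getLastD 0) (τ''.headD 0) * pword p τ'') := by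
            refine mul_le_mul_of_nonneg_left
              (mul_le_mul_of_nonneg_right hl3 hpw2.le) (by positivity)
        _ = χ (τ'.headD 0) * (pword p τ' * p (τ'.getLastD 0) (τ''.headD 0) * pword p τ'') := by
            ring
    have h2 : sm ^ r * (sword sr u ^ r * sword sr v ^ r) ≤ sword sr (u ++ v) ^ r := by
      rw [← Real.mul_rpow hswu.1.le hswv.1.le, ← Real.mul_rpow hsm.le
        (mul_nonneg hswu.1.le hswv.1.le)]
      refine Real.rpow_le_rpow (mul_nonneg hsm.le (mul_nonneg hswu.1.le hswv.1.le)) ?_ hr.le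
      rw [sword_eq_pword sr (u ++ v), pword_append sr (u := u) v hu hv,
        ← sword_eq_pword, ← sword_eq_pword]
      have hsrab := hsrf _ _ (hΨu _ (getLastD_mem hu)) (hΨv _ (headD_mem hv)) hab
      calc sm * (sword sr u * sword sr v) = sword sr u * sm * sword sr v := by ring
        _ ≤ sword sr u * sr (u.getLastD 0) (v.headD 0) * sword sr v :=
            mul_le_mul_of_nonneg_right
              (mul_le_mul_of_nonneg_left hsrab.2.2 hswu.1.le) hswv.1.le
    rw [Er_eq _ hne, Er_eq u hu, Er_eq v hv]
    have hmuu := muJ_pos u hsu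
    have hmuv := muJ_pos v hsv
    calc (pm * sm ^ r / cM) * (muJ p χ N u * sword sr u ^ r * (muJ p χ N v * sword sr v ^ r))
        = (pm / cM * (muJ p χ N u * muJ p χ N v)) * (sm ^ r * (sword sr u ^ r * sword sr v ^ r)) := by
          ring
      _ ≤ muJ p χ N (u ++ v) * sword sr (u ++ v) ^ r := by
          refine mul_le_mul h1 h2 ?_ (muJ_pos _ h).le
          have h3 : (0:ℝ) ≤ sm ^ r := Real.rpow_nonneg hsm.le r
          have h4 : (0:ℝ) ≤ sword sr u ^ r := Real.rpow_nonneg hswu.1.le r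
          have h5 : (0:ℝ) ≤ sword sr v ^ r := Real.rpow_nonneg hswv.1.le r
          positivity

  -- splitting a word in 𝒮_{n+l} into its first n and last l letters
  have take_drop_mem : ∀ (n l : ℕ) (σ : List ℕ), 1 ≤ n → 1 ≤ l → σ ∈ Sn p N (n + l) →
      σ.take n ∈ Sn p N n ∧ σ.drop n ∈ Sn p N l ∧ σ.take n ≠ [] ∧ σ.drop n ≠ [] := by
    intro n l σ hn hl hσ
    obtain ⟨hlen, hsw⟩ := (mem_Sn' _ σ).1 hσ
    obtain ⟨hne, hΨ, hch⟩ := (isSword_iff' σ).1 hsw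
    have hlt : σ.take n ++ σ.drop n = σ := List.take_append_drop n σ
    have hlen1 : (σ.take n).length = n := by rw [List.length_take, hlen]; omega
    have hlen2 : (σ.drop n).length = l := by rw [List.length_drop, hlen]; omega
    have hne1 : σ.take n ≠ [] := by
      intro h0; rw [h0] at hlen1; simp at hlen1; omega
    have hne2 : σ.drop n ≠ [] := by
      intro h0; rw [h0] at hlen2; simp at hlen2; omega
    have hch' := hch
    rw [← hlt] at hch'
    obtain ⟨hch1, hch2, _⟩ := List.isChain_append.mp hch'
    refine ⟨(mem_Sn' n _).2 ⟨hlen1, (isSword_iff' _).2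
        ⟨hne1, fun x hx => hΨ x (List.take_subset n σ hx), hch1⟩⟩,
      (mem_Sn' l _).2 ⟨hlen2, (isSword_iff' _).2
        ⟨hne2, fun x hx => hΨ x (List.drop_subset n σ hx), hch2⟩⟩, hne1, hne2⟩
  -- the submultiplicative upper bound
  have upper : ∀ n l : ℕ, 1 ≤ n → 1 ≤ l →
      (∑ σ ∈ Sn p N (n + l), Er p χ sr N r σ ^ s) ≤
        cm⁻¹ ^ s * ((∑ σ ∈ Sn p N n, Er p χ sr N r σ ^ s) *
          (∑ σ ∈ Sn p N l, Er p χ sr N r σ ^ s)) := by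
    intro n l hn hl
    have key : ∀ σ ∈ Sn p N (n + l), Er p χ sr N r σ ^ s ≤
        cm⁻¹ ^ s * (Er p χ sr N r (σ.take n) ^ s * Er p χ sr N r (σ.drop n) ^ s) := by
      intro σ hσ
      obtain ⟨h1, h2, hne1, hne2⟩ := take_drop_mem n l σ hn hl hσ
      have hswσ := ((mem_Sn' _ σ).1 hσ).2
      have hEr1 := Er_pos _ ((mem_Sn' n _).1 h1).2
      have hEr2 := Er_pos _ ((mem_Sn' l _).1 h2).2
      have hle : Er p χ sr N r σ ≤
          cm⁻¹ * (Er p χ sr N r (σ.take n) * Er p χ sr N r (σ.drop n)) := by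
        have := Er_append_le (σ.take n) (σ.drop n) hne1 hne2
          (by rw [List.take_append_drop]; exact hswσ)
        rwa [List.take_append_drop] at this
      calc Er p χ sr N r σ ^ s ≤
            (cm⁻¹ * (Er p χ sr N r (σ.take n) * Er p χ sr N r (σ.drop n))) ^ s :=
            Real.rpow_le_rpow (Er_pos σ hswσ).le hle hs.le
        _ = cm⁻¹ ^ s * (Er p χ sr N r (σ.take n) ^ s * Er p χ sr N r (σ.drop n) ^ s) := by
            rw [Real.mul_rpow (by positivity) (mul_nonneg hEr1.le hEr2.le),
              Real.mul_rpow hEr1.le hEr2.le]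
    have hinj : ∀ σ₁ ∈ Sn p N (n + l), ∀ σ₂ ∈ Sn p N (n + l),
        (σ₁.take n, σ₁.drop n) = (σ₂.take n, σ₂.drop n) → σ₁ = σ₂ := by
      intro σ₁ _ σ₂ _ hq
      rw [Prod.mk.injEq] at hq
      rw [← List.take_append_drop n σ₁, ← List.take_append_drop n σ₂, hq.1, hq.2]
    calc ∑ σ ∈ Sn p N (n + l), Er p χ sr N r σ ^ s
        ≤ ∑ σ ∈ Sn p N (n + l),
            cm⁻¹ ^ s * (Er p χ sr N r (σ.take n) ^ s * Er p χ sr N r (σ.drop n) ^ s) :=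
          Finset.sum_le_sum key
      _ = cm⁻¹ ^ s * ∑ σ ∈ Sn p N (n + l),
            (Er p χ sr N r (σ.take n) ^ s * Er p χ sr N r (σ.drop n) ^ s) := by
          rw [← Finset.mul_sum]
      _ ≤ cm⁻¹ ^ s * ∑ q' ∈ (Sn p N n) ×ˢ (Sn p N l),
            (Er p χ sr N r q'.1 ^ s * Er p χ sr N r q'.2 ^ s) := by
          refine mul_le_mul_of_nonneg_left ?_ (by positivity)
          calc ∑ σ ∈ Sn p N (n + l),
                (Er p χ sr N r (σ.take n) ^ s * Er p χ sr N r (σ.drop n) ^ s)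
              = ∑ q' ∈ (Sn p N (n + l)).image (fun σ => (σ.take n, σ.drop n)),
                  (Er p χ sr N r q'.1 ^ s * Er p χ sr N r q'.2 ^ s) :=
                (Finset.sum_image (f := fun q' : List ℕ × List ℕ =>
                  Er p χ sr N r q'.1 ^ s * Er p χ sr N r q'.2 ^ s) hinj).symm
            _ ≤ ∑ q' ∈ (Sn p N n) ×ˢ (Sn p N l),
                  (Er p χ sr N r q'.1 ^ s * Er p χ sr N r q'.2 ^ s) := by
                refine Finset.sum_le_sum_of_subset_of_nonneg ?_ fun q' hq' _ => ?_
                · intro q' hq'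
                  obtain ⟨σ, hσ, rfl⟩ := Finset.mem_image.mp hq'
                  obtain ⟨h1, h2, _, _⟩ := take_drop_mem n l σ hn hl hσ
                  exact Finset.mem_product.2 ⟨h1, h2⟩
                · obtain ⟨h1, h2⟩ := Finset.mem_product.mp hq'
                  exact mul_nonneg (Real.rpow_nonneg (Er_pos _ ((mem_Sn' n _).1 h1).2).le s)
                    (Real.rpow_nonneg (Er_pos _ ((mem_Sn' l _).1 h2).2).le s)
      _ = cm⁻¹ ^ s * ((∑ σ ∈ Sn p N n, Er p χ sr N r σ ^ s) *
            (∑ σ ∈ Sn p N l, Er p χ sr N r σ ^ s)) := by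
          rw [Finset.sum_mul_sum]
          rw [Finset.sum_product]

  -- connecting paths from (A5)
  have hpath0 : ∀ a b : ℕ, ∃ c : List ℕ, a ∈ Finset.Icc 1 N → b ∈ Finset.Icc 1 N →
      ((∀ x ∈ c, x ∈ Finset.Icc 1 N) ∧ List.Chain (edge p) a (c ++ [b])) := by
    intro a b
    by_cases ha : a ∈ Finset.Icc 1 N
    · by_cases hb : b ∈ Finset.Icc 1 N
      · obtain ⟨c, hc1, hc2⟩ := hA5 a ha b hb
        exact ⟨c, fun _ _ => ⟨hc1, hc2⟩⟩
      · exact ⟨[], fun _ h => absurd h hb⟩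
    · exact ⟨[], fun h => absurd h ha⟩
  choose path hpath using hpath0
  obtain ⟨M, hM⟩ : ∃ M : ℕ, ∀ a b : ℕ, a ∈ Finset.Icc 1 N → b ∈ Finset.Icc 1 N →
      (path a b).length ≤ M :=
    ⟨((Finset.Icc 1 N) ×ˢ (Finset.Icc 1 N)).sup (fun q' => (path q'.1 q'.2).length),
      fun a b ha hb => Finset.le_sup (f := fun q' : ℕ × ℕ => (path q'.1 q'.2).length)
        (b := (a, b)) (Finset.mem_product.2 ⟨ha, hb⟩)⟩
  -- the full concatenated word is admissible
  have hfull : ∀ α β : List ℕ, isSword p N α → isSword p N β →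
      isSword p N (α ++ (path (α.getLastD 0) (β.headD 0) ++ β)) := by
    intro α β hα hβ
    obtain ⟨hαne, hαΨ, hαch⟩ := (isSword_iff' α).1 hα
    obtain ⟨hβne, hβΨ, hβch⟩ := (isSword_iff' β).1 hβ
    have ha : α.getLastD 0 ∈ Finset.Icc 1 N := hαΨ _ (getLastD_mem hαne)
    have hb : β.headD 0 ∈ Finset.Icc 1 N := hβΨ _ (headD_mem hβne)
    obtain ⟨hcΨ, hcch⟩ := hpath _ _ ha hb
    have h1 : ((α.getLastD 0 :: path (α.getLastD 0) (β.headD 0)) ++ [β.headD 0]).Chain'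
        (edge p) := by
      rw [List.cons_append]
      exact hcch
    obtain ⟨h2, _, h3⟩ := List.isChain_append.mp h1
    have h4 : ((α.getLastD 0 :: path (α.getLastD 0) (β.headD 0)) ++ β).Chain' (edge p) := by
      refine List.isChain_append.mpr ⟨h2, hβch, fun x hx y hy => ?_⟩
      rw [head?_eq_headD hβne, Option.mem_some_iff] at hy
      subst hy
      exact h3 x hx (β.headD 0) (by simp)
    rw [List.cons_append] at h4
    have hch : (α ++ (path (α.getLastD 0) (β.headD 0) ++ β)).Chain' (edge p) :=
      chain'_glue hαch (getLast?_eq_getLastD hαne) h4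
    refine (isSword_iff' _).2 ⟨?_, ?_, hch⟩
    · intro h0
      exact hαne (List.append_eq_nil_iff.mp h0).1
    · intro x hx
      rcases List.mem_append.mp hx with hx | hx
      · exact hαΨ x hx
      · rcases List.mem_append.mp hx with hx | hx
        · exact hcΨ x hx
        · exact hβΨ x hx
  -- lower bound for the energy of the full concatenation
  have hfullE : ∀ α β : List ℕ, isSword p N α → isSword p N β →
      min (pm * sm ^ r / cM) ((pm * sm ^ r / cM) * ((pm * sm ^ r / cM) *
          (cm * pm ^ M * ((sm ^ M : ℝ)) ^ r))) *
        (Er p χ sr N r α * Er p χ sr N r β) ≤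
      Er p χ sr N r (α ++ (path (α.getLastD 0) (β.headD 0) ++ β)) := by
    intro α β hα hβ
    obtain ⟨hαne, hαΨ, hαch⟩ := (isSword_iff' α).1 hα
    obtain ⟨hβne, hβΨ, hβch⟩ := (isSword_iff' β).1 hβ
    have ha : α.getLastD 0 ∈ Finset.Icc 1 N := hαΨ _ (getLastD_mem hαne)
    have hb : β.headD 0 ∈ Finset.Icc 1 N := hβΨ _ (headD_mem hβne)
    have hswfull := hfull α β hα hβ
    have hκ1 : (0 : ℝ) < pm * sm ^ r / cM := by
      have := Real.rpow_pos_of_pos hsm r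
      positivity
    have hEα := Er_pos α hα
    have hEβ := Er_pos β hβ
    have hcbne : path (α.getLastD 0) (β.headD 0) ++ β ≠ [] := by
      intro h0
      exact hβne (List.append_eq_nil_iff.mp h0).2
    have hstep1 := Er_append_ge α (path (α.getLastD 0) (β.headD 0) ++ β) hαne hcbne hswfull
    have hswcb : isSword p N (path (α.getLastD 0) (β.headD 0) ++ β) :=
      (split_isSword α _ hαne hcbne hswfull).2.1
    have hEcb := Er_pos _ hswcb
    by_cases hc : path (α.getLastD 0) (β.headD 0) = []
    · -- no connecting word is needed
      rw [hc, List.nil_append] at hstep1 hswfull ⊢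
      calc min (pm * sm ^ r / cM) ((pm * sm ^ r / cM) * ((pm * sm ^ r / cM) *
              (cm * pm ^ M * ((sm ^ M : ℝ)) ^ r))) * (Er p χ sr N r α * Er p χ sr N r β)
          ≤ (pm * sm ^ r / cM) * (Er p χ sr N r α * Er p χ sr N r β) := by
            refine mul_le_mul_of_nonneg_right (min_le_left _ _) ?_
            exact mul_nonneg hEα.le hEβ.le
        _ ≤ Er p χ sr N r (α ++ β) := hstep1
    · -- estimate the energy of the connecting word from below
      have hswc : isSword p N (path (α.getLastD 0) (β.headD 0)) :=
        (split_isSword _ β hc hβne hswcb).1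
      obtain ⟨_, hcΨ, hcch⟩ := (isSword_iff' _).1 hswc
      have hmM : (path (α.getLastD 0) (β.headD 0)).length ≤ M := hM _ _ ha hb
      have hEc : cm * pm ^ M * ((sm ^ M : ℝ)) ^ r ≤
          Er p χ sr N r (path (α.getLastD 0) (β.headD 0)) := by
        rw [Er_eq _ hc]
        have h1 : cm * pm ^ ((path (α.getLastD 0) (β.headD 0)).length - 1) ≤
            muJ p χ N (path (α.getLastD 0) (β.headD 0)) := muJ_ge_self _ hc hcΨ hcch
        have h2 : ((sm ^ ((path (α.getLastD 0) (β.headD 0)).length - 1) : ℝ)) ^ r ≤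
            sword sr (path (α.getLastD 0) (β.headD 0)) ^ r := by
          refine Real.rpow_le_rpow (pow_nonneg hsm.le _) ?_ hr.le
          exact (sword_facts _ hcΨ hcch).2.2
        have h3 : (pm : ℝ) ^ M ≤ pm ^ ((path (α.getLastD 0) (β.headD 0)).length - 1) :=
          pow_le_pow_of_le_one hpm.le hpm1 (by omega)
        have h4 : ((sm ^ M : ℝ)) ^ r ≤
            ((sm ^ ((path (α.getLastD 0) (β.headD 0)).length - 1) : ℝ)) ^ r := by
          refine Real.rpow_le_rpow (pow_nonneg hsm.le _) ?_ hr.le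
          exact pow_le_pow_of_le_one hsm.le hsm1 (by omega)
        calc cm * pm ^ M * ((sm ^ M : ℝ)) ^ r
            ≤ cm * pm ^ ((path (α.getLastD 0) (β.headD 0)).length - 1) *
                ((sm ^ ((path (α.getLastD 0) (β.headD 0)).length - 1) : ℝ)) ^ r := by
              refine mul_le_mul (mul_le_mul_of_nonneg_left h3 hcm.le) h4 ?_ ?_
              · exact Real.rpow_nonneg (pow_nonneg hsm.le M) r
              · positivity
          _ ≤ muJ p χ N (path (α.getLastD 0) (β.headD 0)) *
                sword sr (path (α.getLastD 0) (β.headD 0)) ^ r := by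
              refine mul_le_mul h1 h2 ?_ (muJ_pos _ hswc).le
              exact Real.rpow_nonneg (pow_nonneg hsm.le _) r
      have hstep2 := Er_append_ge _ β hc hβne hswcb
      have hEcpos := Er_pos _ hswc
      calc min (pm * sm ^ r / cM) ((pm * sm ^ r / cM) * ((pm * sm ^ r / cM) *
              (cm * pm ^ M * ((sm ^ M : ℝ)) ^ r))) * (Er p χ sr N r α * Er p χ sr N r β)
          ≤ ((pm * sm ^ r / cM) * ((pm * sm ^ r / cM) *
              (cm * pm ^ M * ((sm ^ M : ℝ)) ^ r))) * (Er p χ sr N r α * Er p χ sr N r β) := by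
            refine mul_le_mul_of_nonneg_right (min_le_right _ _) ?_
            exact mul_nonneg hEα.le hEβ.le
        _ = (pm * sm ^ r / cM) * (Er p χ sr N r α *
              ((pm * sm ^ r / cM) * ((cm * pm ^ M * ((sm ^ M : ℝ)) ^ r) *
                Er p χ sr N r β))) := by ring
        _ ≤ (pm * sm ^ r / cM) * (Er p χ sr N r α *
              ((pm * sm ^ r / cM) * (Er p χ sr N r (path (α.getLastD 0) (β.headD 0)) *
                Er p χ sr N r β))) := by
            refine mul_le_mul_of_nonneg_left (mul_le_mul_of_nonneg_left
              (mul_le_mul_of_nonneg_left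
                (mul_le_mul_of_nonneg_right hEc hEβ.le) hκ1.le) hEα.le) hκ1.le
        _ ≤ (pm * sm ^ r / cM) * (Er p χ sr N r α *
              Er p χ sr N r (path (α.getLastD 0) (β.headD 0) ++ β)) := by
            refine mul_le_mul_of_nonneg_left (mul_le_mul_of_nonneg_left hstep2 hEα.le) hκ1.le
        _ ≤ Er p χ sr N r (α ++ (path (α.getLastD 0) (β.headD 0) ++ β)) := hstep1
  -- truncation estimate
  have hcut : ∀ (k : ℕ) (w : List ℕ), isSword p N w → 1 ≤ k → w.length - k ≤ M →
      (cm / (2 ^ M * cM)) * Er p χ sr N r w ≤ Er p χ sr N r (w.take k) := by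
    intro k w hw hk hwk
    have hδ1 : cm / (2 ^ M * cM) ≤ 1 := by
      rw [div_le_one (by positivity)]
      calc cm ≤ cM := hcmM
        _ ≤ 2 ^ M * cM := by
          nth_rewrite 1 [← one_mul cM]
          exact mul_le_mul_of_nonneg_right (one_le_pow₀ one_le_two) hcM.le
    obtain ⟨hwne, hwΨ, hwch⟩ := (isSword_iff' w).1 hw
    by_cases hv : w.drop k = []
    · rw [List.take_of_length_le (List.drop_eq_nil_iff.mp hv)]
      nth_rewrite 2 [← one_mul (Er p χ sr N r w)]
      exact mul_le_mul_of_nonneg_right hδ1 (Er_pos w hw).le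
    · have htne : w.take k ≠ [] := by
        intro h0
        have : (w.take k).length = 0 := by rw [h0]; rfl
        rw [List.length_take] at this
        rcases Nat.min_eq_zero_iff.mp this with h | h
        · omega
        · exact hv (List.drop_eq_nil_iff.mpr (by omega))
      have hsww : isSword p N (w.take k ++ w.drop k) := by
        rw [List.take_append_drop]; exact hw
      have h1 := Er_append_le (w.take k) (w.drop k) htne hv hsww
      rw [List.take_append_drop] at h1
      have hswv : isSword p N (w.drop k) := (split_isSword _ _ htne hv hsww).2.1
      have hswt : isSword p N (w.take k) := (split_isSword _ _ htne hv hsww).1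
      have h2 : Er p χ sr N r (w.drop k) ≤ 2 ^ M * cM := by
        refine le_trans (Er_le _ hswv) ?_
        refine mul_le_mul_of_nonneg_right ?_ hcM.le
        refine pow_le_pow_right₀ one_le_two ?_
        rw [List.length_drop]
        omega
      have hEt := Er_pos _ hswt
      calc (cm / (2 ^ M * cM)) * Er p χ sr N r w
          ≤ (cm / (2 ^ M * cM)) * (cm⁻¹ * (Er p χ sr N r (w.take k) * (2 ^ M * cM))) := by
            refine mul_le_mul_of_nonneg_left ?_ (by positivity)
            refine le_trans h1 ?_
            refine mul_le_mul_of_nonneg_left ?_ (by positivity)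
            exact mul_le_mul_of_nonneg_left h2 hEt.le
        _ = Er p χ sr N r (w.take k) := by
            field_simp

  -- the counting bound: fibers of the truncated-concatenation map are small
  have htake : ∀ (n l : ℕ) (α β : List ℕ), α.length = n →
      ((α ++ (path (α.getLastD 0) (β.headD 0) ++ β)).take (n + l)).take n = α := by
    intro n l α β hlenα
    rw [List.take_take, min_eq_left (Nat.le_add_right n l), List.take_left' hlenα]
  have count : ∀ (n l : ℕ), 1 ≤ n → 1 ≤ l → ∀ y : List ℕ,
      (((Sn p N n) ×ˢ (Sn p N l)).filter (fun q' : List ℕ × List ℕ =>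
        (q'.1 ++ (path (q'.1.getLastD 0) (q'.2.headD 0) ++ q'.2)).take (n + l) = y)).card
        ≤ ((Finset.Icc 1 N) ×ˢ ((Finset.range (M + 1)).biUnion
            (fun m => wordsOfLen (Finset.Icc 1 N) m))).card := by
    intro n l hn hl y
    refine Finset.card_le_card_of_injOn
      (fun q' => (q'.2.headD 0,
        q'.2.drop (l - min l (path (q'.1.getLastD 0) (q'.2.headD 0)).length))) ?_ ?_
    · intro q' hq'
      obtain ⟨hmem, hFy⟩ := Finset.mem_filter.mp hq'
      obtain ⟨hα, hβ⟩ := Finset.mem_product.mp hmem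
      obtain ⟨hlenα, hswα⟩ := (mem_Sn' n _).1 hα
      obtain ⟨hlenβ, hswβ⟩ := (mem_Sn' l _).1 hβ
      obtain ⟨hαne, hαΨ, _⟩ := (isSword_iff' _).1 hswα
      obtain ⟨hβne, hβΨ, _⟩ := (isSword_iff' _).1 hswβ
      have ha : q'.1.getLastD 0 ∈ Finset.Icc 1 N := hαΨ _ (getLastD_mem hαne)
      have hb : q'.2.headD 0 ∈ Finset.Icc 1 N := hβΨ _ (headD_mem hβne)
      refine Finset.mem_product.2 ⟨hb, Finset.mem_biUnion.2
        ⟨min l (path (q'.1.getLastD 0) (q'.2.headD 0)).length, Finset.mem_range.2 ?_, ?_⟩⟩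
      · have := hM _ _ ha hb
        omega
      · refine mem_wordsOfLen.2 ⟨?_, fun x hx => hβΨ x (List.drop_subset _ _ hx)⟩
        rw [List.length_drop, hlenβ]
        omega
    · intro q₁ hq₁ q₂ hq₂ hφ
      simp only [Finset.coe_filter, Set.mem_setOf_eq] at hq₁ hq₂
      obtain ⟨hmem₁, hFy₁⟩ := hq₁
      obtain ⟨hmem₂, hFy₂⟩ := hq₂
      obtain ⟨hα₁, hβ₁⟩ := Finset.mem_product.mp hmem₁
      obtain ⟨hα₂, hβ₂⟩ := Finset.mem_product.mp hmem₂
      obtain ⟨hlenα₁, hswα₁⟩ := (mem_Sn' n _).1 hα₁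
      obtain ⟨hlenα₂, hswα₂⟩ := (mem_Sn' n _).1 hα₂
      obtain ⟨hlenβ₁, hswβ₁⟩ := (mem_Sn' l _).1 hβ₁
      obtain ⟨hlenβ₂, hswβ₂⟩ := (mem_Sn' l _).1 hβ₂
      have h1 : q₁.1 = q₂.1 := by
        rw [← htake n l q₁.1 q₁.2 hlenα₁, ← htake n l q₂.1 q₂.2 hlenα₂, hFy₁, hFy₂]
      rw [Prod.ext_iff] at hφ
      obtain ⟨hφ1, hφ2⟩ := hφ
      simp only at hφ1 hφ2
      have hb12 : q₁.2.headD 0 = q₂.2.headD 0 := hφ1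
      rw [← h1, ← hb12] at hφ2 hFy₂
      rcases le_or_gt l (path (q₁.1.getLastD 0) (q₁.2.headD 0)).length with hlm | hml
      · -- the path is long: β is determined directly
        rw [min_eq_left hlm, Nat.sub_self, List.drop_zero, List.drop_zero] at hφ2
        exact Prod.ext h1 hφ2
      · -- the path is short
        rw [min_eq_right hml.le] at hφ2
        have hyβ : ∀ β' : List ℕ,
            (q₁.1 ++ (path (q₁.1.getLastD 0) (q₁.2.headD 0) ++ β')).take (n + l) =
            (q₁.1 ++ path (q₁.1.getLastD 0) (q₁.2.headD 0)) ++
              β'.take (l - (path (q₁.1.getLastD 0) (q₁.2.headD 0)).length) := by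
          intro β'
          rw [← List.append_assoc, List.take_append,
            List.take_of_length_le (by
              rw [List.length_append, hlenα₁]
              have := hml.le
              omega),
            List.length_append, hlenα₁]
          congr 2
          omega
        have h2 : q₁.2.take (l - (path (q₁.1.getLastD 0) (q₁.2.headD 0)).length) =
            q₂.2.take (l - (path (q₁.1.getLastD 0) (q₁.2.headD 0)).length) := by
          have e1 := hyβ q₁.2
          have e2 := hyβ q₂.2
          rw [hFy₁] at e1
          rw [hFy₂] at e2
          rw [e1] at e2
          exact List.append_cancel_left e2
        have h3 : q₁.2 = q₂.2 := by
          rw [← List.take_append_drop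
              (l - (path (q₁.1.getLastD 0) (q₁.2.headD 0)).length) q₁.2,
            ← List.take_append_drop
              (l - (path (q₁.1.getLastD 0) (q₁.2.headD 0)).length) q₂.2, h2, hφ2]
        exact Prod.ext h1 h3
  -- positivity of the counting constant
  have hKpos : 0 < ((Finset.Icc 1 N) ×ˢ ((Finset.range (M + 1)).biUnion
      (fun m => wordsOfLen (Finset.Icc 1 N) m))).card := by
    refine Finset.card_pos.2 ⟨(1, []), Finset.mem_product.2 ⟨h1Ψ, Finset.mem_biUnion.2
      ⟨0, Finset.mem_range.2 (by omega), mem_wordsOfLen.2 ⟨rfl, by simp⟩⟩⟩⟩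
  -- the per-pair estimate for the truncated concatenation
  have hκ0 : (0 : ℝ) < (cm / (2 ^ M * cM)) * min (pm * sm ^ r / cM)
      ((pm * sm ^ r / cM) * ((pm * sm ^ r / cM) * (cm * pm ^ M * ((sm ^ M : ℝ)) ^ r))) := by
    have h1 : (0 : ℝ) < pm * sm ^ r / cM := by
      have := Real.rpow_pos_of_pos hsm r
      positivity
    have h2 : (0 : ℝ) < cm * pm ^ M * ((sm ^ M : ℝ)) ^ r := by
      have := Real.rpow_pos_of_pos (pow_pos hsm M) r
      positivity
    have h3 : (0 : ℝ) < cm / (2 ^ M * cM) := by positivity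
    exact mul_pos h3 (lt_min h1 (mul_pos h1 (mul_pos h1 h2)))
  have keypair : ∀ (n l : ℕ), 1 ≤ n → 1 ≤ l → ∀ α β : List ℕ,
      α ∈ Sn p N n → β ∈ Sn p N l →
      ((cm / (2 ^ M * cM)) * min (pm * sm ^ r / cM)
          ((pm * sm ^ r / cM) * ((pm * sm ^ r / cM) *
            (cm * pm ^ M * ((sm ^ M : ℝ)) ^ r)))) *
        (Er p χ sr N r α * Er p χ sr N r β) ≤
      Er p χ sr N r ((α ++ (path (α.getLastD 0) (β.headD 0) ++ β)).take (n + l)) ∧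
      (α ++ (path (α.getLastD 0) (β.headD 0) ++ β)).take (n + l) ∈ Sn p N (n + l) := by
    intro n l hn hl α β hα hβ
    obtain ⟨hlenα, hswα⟩ := (mem_Sn' n _).1 hα
    obtain ⟨hlenβ, hswβ⟩ := (mem_Sn' l _).1 hβ
    obtain ⟨hαne, hαΨ, _⟩ := (isSword_iff' _).1 hswα
    obtain ⟨hβne, hβΨ, _⟩ := (isSword_iff' _).1 hswβ
    have ha : α.getLastD 0 ∈ Finset.Icc 1 N := hαΨ _ (getLastD_mem hαne)
    have hb : β.headD 0 ∈ Finset.Icc 1 N := hβΨ _ (headD_mem hβne)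
    have hswfull := hfull α β hswα hswβ
    have hlenfull : (α ++ (path (α.getLastD 0) (β.headD 0) ++ β)).length =
        n + ((path (α.getLastD 0) (β.headD 0)).length + l) := by
      rw [List.length_append, List.length_append, hlenα, hlenβ]
    have hmM := hM _ _ ha hb
    have hc := hcut (n + l) _ hswfull (by omega) (by rw [hlenfull]; omega)
    have hfe := hfullE α β hswα hswβ
    constructor
    · calc ((cm / (2 ^ M * cM)) * min (pm * sm ^ r / cM)
            ((pm * sm ^ r / cM) * ((pm * sm ^ r / cM) *
              (cm * pm ^ M * ((sm ^ M : ℝ)) ^ r)))) *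
          (Er p χ sr N r α * Er p χ sr N r β)
          = (cm / (2 ^ M * cM)) * (min (pm * sm ^ r / cM)
            ((pm * sm ^ r / cM) * ((pm * sm ^ r / cM) *
              (cm * pm ^ M * ((sm ^ M : ℝ)) ^ r))) *
            (Er p χ sr N r α * Er p χ sr N r β)) := by ring
        _ ≤ (cm / (2 ^ M * cM)) *
              Er p χ sr N r (α ++ (path (α.getLastD 0) (β.headD 0) ++ β)) :=
            mul_le_mul_of_nonneg_left hfe (by positivity)
        _ ≤ Er p χ sr N r ((α ++ (path (α.getLastD 0) (β.headD 0) ++ β)).take (n + l)) := hc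
    · have hlen : ((α ++ (path (α.getLastD 0) (β.headD 0) ++ β)).take (n + l)).length
          = n + l := by
        rw [List.length_take, hlenfull]
        omega
      obtain ⟨_, hfΨ, hfch⟩ := (isSword_iff' _).1 hswfull
      refine (mem_Sn' _ _).2 ⟨hlen, (isSword_iff' _).2 ⟨?_,
        fun x hx => hfΨ x (List.take_subset _ _ hx),
        hfch.prefix (List.take_prefix _ _)⟩⟩
      intro h0
      rw [h0] at hlen
      simp at hlen
      omega

  -- the supermultiplicative lower bound
  have lower : ∀ n l : ℕ, 1 ≤ n → 1 ≤ l →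
      (((cm / (2 ^ M * cM)) * min (pm * sm ^ r / cM)
          ((pm * sm ^ r / cM) * ((pm * sm ^ r / cM) *
            (cm * pm ^ M * ((sm ^ M : ℝ)) ^ r)))) ^ s) *
        ((∑ σ ∈ Sn p N n, Er p χ sr N r σ ^ s) *
          (∑ σ ∈ Sn p N l, Er p χ sr N r σ ^ s)) ≤
      (((Finset.Icc 1 N) ×ˢ ((Finset.range (M + 1)).biUnion
          (fun m => wordsOfLen (Finset.Icc 1 N) m))).card : ℝ) *
        (∑ σ ∈ Sn p N (n + l), Er p χ sr N r σ ^ s) := by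
    intro n l hn hl
    have key : ∀ q' ∈ (Sn p N n) ×ˢ (Sn p N l),
        (((cm / (2 ^ M * cM)) * min (pm * sm ^ r / cM)
            ((pm * sm ^ r / cM) * ((pm * sm ^ r / cM) *
              (cm * pm ^ M * ((sm ^ M : ℝ)) ^ r)))) ^ s) *
          (Er p χ sr N r q'.1 ^ s * Er p χ sr N r q'.2 ^ s) ≤
        Er p χ sr N r
          ((q'.1 ++ (path (q'.1.getLastD 0) (q'.2.headD 0) ++ q'.2)).take (n + l)) ^ s := by
      intro q' hq'
      obtain ⟨hα, hβ⟩ := Finset.mem_product.mp hq'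
      obtain ⟨hle, _⟩ := keypair n l hn hl q'.1 q'.2 hα hβ
      have hEα := Er_pos _ ((mem_Sn' n _).1 hα).2
      have hEβ := Er_pos _ ((mem_Sn' l _).1 hβ).2
      calc (((cm / (2 ^ M * cM)) * min (pm * sm ^ r / cM)
              ((pm * sm ^ r / cM) * ((pm * sm ^ r / cM) *
                (cm * pm ^ M * ((sm ^ M : ℝ)) ^ r)))) ^ s) *
            (Er p χ sr N r q'.1 ^ s * Er p χ sr N r q'.2 ^ s)
          = (((cm / (2 ^ M * cM)) * min (pm * sm ^ r / cM)
              ((pm * sm ^ r / cM) * ((pm * sm ^ r / cM) *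
                (cm * pm ^ M * ((sm ^ M : ℝ)) ^ r)))) *
              (Er p χ sr N r q'.1 * Er p χ sr N r q'.2)) ^ s := by
            rw [Real.mul_rpow hκ0.le (mul_nonneg hEα.le hEβ.le),
              Real.mul_rpow hEα.le hEβ.le]
        _ ≤ Er p χ sr N r
              ((q'.1 ++ (path (q'.1.getLastD 0) (q'.2.headD 0) ++ q'.2)).take (n + l)) ^ s :=
            Real.rpow_le_rpow (by positivity) hle hs.le
    calc (((cm / (2 ^ M * cM)) * min (pm * sm ^ r / cM)
            ((pm * sm ^ r / cM) * ((pm * sm ^ r / cM) *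
              (cm * pm ^ M * ((sm ^ M : ℝ)) ^ r)))) ^ s) *
          ((∑ σ ∈ Sn p N n, Er p χ sr N r σ ^ s) *
            (∑ σ ∈ Sn p N l, Er p χ sr N r σ ^ s))
        = ∑ q' ∈ (Sn p N n) ×ˢ (Sn p N l),
            (((cm / (2 ^ M * cM)) * min (pm * sm ^ r / cM)
              ((pm * sm ^ r / cM) * ((pm * sm ^ r / cM) *
                (cm * pm ^ M * ((sm ^ M : ℝ)) ^ r)))) ^ s) *
              (Er p χ sr N r q'.1 ^ s * Er p χ sr N r q'.2 ^ s) := by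
          rw [Finset.sum_mul_sum, ← Finset.sum_product', Finset.mul_sum]
      _ ≤ ∑ q' ∈ (Sn p N n) ×ˢ (Sn p N l), Er p χ sr N r
            ((q'.1 ++ (path (q'.1.getLastD 0) (q'.2.headD 0) ++ q'.2)).take (n + l)) ^ s :=
          Finset.sum_le_sum key
      _ = ∑ y ∈ ((Sn p N n) ×ˢ (Sn p N l)).image (fun q' : List ℕ × List ℕ =>
            (q'.1 ++ (path (q'.1.getLastD 0) (q'.2.headD 0) ++ q'.2)).take (n + l)),
            (((Sn p N n) ×ˢ (Sn p N l)).filter (fun q' : List ℕ × List ℕ =>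
              (q'.1 ++ (path (q'.1.getLastD 0) (q'.2.headD 0) ++ q'.2)).take (n + l) = y)).card
              • (Er p χ sr N r y ^ s) :=
          Finset.sum_comp (fun y => Er p χ sr N r y ^ s) (fun q' : List ℕ × List ℕ =>
            (q'.1 ++ (path (q'.1.getLastD 0) (q'.2.headD 0) ++ q'.2)).take (n + l))
      _ ≤ ∑ y ∈ ((Sn p N n) ×ˢ (Sn p N l)).image (fun q' : List ℕ × List ℕ =>
            (q'.1 ++ (path (q'.1.getLastD 0) (q'.2.headD 0) ++ q'.2)).take (n + l)),
            (((Finset.Icc 1 N) ×ˢ ((Finset.range (M + 1)).biUnion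
              (fun m => wordsOfLen (Finset.Icc 1 N) m))).card : ℝ) * (Er p χ sr N r y ^ s) := by
          refine Finset.sum_le_sum fun y hy => ?_
          obtain ⟨q', hq', rfl⟩ := Finset.mem_image.mp hy
          obtain ⟨hα, hβ⟩ := Finset.mem_product.mp hq'
          obtain ⟨_, hmemF⟩ := keypair n l hn hl q'.1 q'.2 hα hβ
          have hEF := Er_pos _ ((mem_Sn' _ _).1 hmemF).2
          rw [nsmul_eq_mul]
          exact mul_le_mul_of_nonneg_right (Nat.cast_le.2 (count n l hn hl _))
            (Real.rpow_nonneg hEF.le s)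
      _ = (((Finset.Icc 1 N) ×ˢ ((Finset.range (M + 1)).biUnion
            (fun m => wordsOfLen (Finset.Icc 1 N) m))).card : ℝ) *
          ∑ y ∈ ((Sn p N n) ×ˢ (Sn p N l)).image (fun q' : List ℕ × List ℕ =>
            (q'.1 ++ (path (q'.1.getLastD 0) (q'.2.headD 0) ++ q'.2)).take (n + l)),
            (Er p χ sr N r y ^ s) := by
          rw [Finset.mul_sum]
      _ ≤ (((Finset.Icc 1 N) ×ˢ ((Finset.range (M + 1)).biUnion
            (fun m => wordsOfLen (Finset.Icc 1 N) m))).card : ℝ) *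
          (∑ σ ∈ Sn p N (n + l), Er p χ sr N r σ ^ s) := by
          refine mul_le_mul_of_nonneg_left ?_ (Nat.cast_nonneg _)
          refine Finset.sum_le_sum_of_subset_of_nonneg ?_ fun σ hσ _ => ?_
          · intro y hy
            obtain ⟨q', hq', rfl⟩ := Finset.mem_image.mp hy
            obtain ⟨hα, hβ⟩ := Finset.mem_product.mp hq'
            exact (keypair n l hn hl q'.1 q'.2 hα hβ).2
          · exact Real.rpow_nonneg (Er_pos _ ((mem_Sn' _ _).1 hσ).2).le s
  -- conclusion
  refine ⟨(((cm / (2 ^ M * cM)) * min (pm * sm ^ r / cM)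
      ((pm * sm ^ r / cM) * ((pm * sm ^ r / cM) *
        (cm * pm ^ M * ((sm ^ M : ℝ)) ^ r)))) ^ s) /
      (((Finset.Icc 1 N) ×ˢ ((Finset.range (M + 1)).biUnion
        (fun m => wordsOfLen (Finset.Icc 1 N) m))).card : ℝ),
    cm⁻¹ ^ s, ?_, ?_, ?_⟩
  · have h1 : (0 : ℝ) < (((Finset.Icc 1 N) ×ˢ ((Finset.range (M + 1)).biUnion
        (fun m => wordsOfLen (Finset.Icc 1 N) m))).card : ℝ) := by
      exact_mod_cast hKpos
    exact div_pos (Real.rpow_pos_of_pos hκ0 s) h1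
  · exact Real.rpow_pos_of_pos (inv_pos.2 hcm) s
  · intro n l hn hl
    have hKR : (0 : ℝ) < (((Finset.Icc 1 N) ×ˢ ((Finset.range (M + 1)).biUnion
        (fun m => wordsOfLen (Finset.Icc 1 N) m))).card : ℝ) := by
      exact_mod_cast hKpos
    constructor
    · have h := lower n l hn hl
      rw [div_mul_eq_mul_div, div_mul_eq_mul_div, div_le_iff₀ hKR]
      calc (((cm / (2 ^ M * cM)) * min (pm * sm ^ r / cM)
              ((pm * sm ^ r / cM) * ((pm * sm ^ r / cM) *
                (cm * pm ^ M * ((sm ^ M : ℝ)) ^ r)))) ^ s) *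
            (∑ σ ∈ Sn p N n, Er p χ sr N r σ ^ s) *
            (∑ σ ∈ Sn p N l, Er p χ sr N r σ ^ s)
          = (((cm / (2 ^ M * cM)) * min (pm * sm ^ r / cM)
              ((pm * sm ^ r / cM) * ((pm * sm ^ r / cM) *
                (cm * pm ^ M * ((sm ^ M : ℝ)) ^ r)))) ^ s) *
            ((∑ σ ∈ Sn p N n, Er p χ sr N r σ ^ s) *
              (∑ σ ∈ Sn p N l, Er p χ sr N r σ ^ s)) := by ring
        _ ≤ (((Finset.Icc 1 N) ×ˢ ((Finset.range (M + 1)).biUnion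
              (fun m => wordsOfLen (Finset.Icc 1 N) m))).card : ℝ) *
            (∑ σ ∈ Sn p N (n + l), Er p χ sr N r σ ^ s) := h
        _ = (∑ σ ∈ Sn p N (n + l), Er p χ sr N r σ ^ s) *
            (((Finset.Icc 1 N) ×ˢ ((Finset.range (M + 1)).biUnion
              (fun m => wordsOfLen (Finset.Icc 1 N) m))).card : ℝ) := by ring
    · have h := upper n l hn hl
      rw [mul_assoc]
      exact h

end MTM

end
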